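/- arXiv:2302.13660 — 2 statements merged into one kernel-verified Lean document; each statement's English description precedes it below -/
import Mathlib

section
/- For a linearly ordered field F, the Cut Axiom (CA) holds in F if and only if the Lebesgue Measure Property (LMP) holds in F. -/
namespace Littlewood

variable {F : Type*} [Field F] [LinearOrder F] [IsStrictOrderedRing F]

/-- A sequence `s` in `F` converges to `L`. -/
def SeqConv (s : ℕ → F) (L : F) : Prop :=
  ∀ ε : F, 0 < ε → ∃ N : ℕ, ∀ n, N ≤ n → s n - L ∈ Set.Ioo (-ε) ε

/-- `φ` is a step function on `[a,b]`: there is a partition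
`a = x 0 < x 1 < ⋯ < x n = b` such that `φ` is constant on each open subinterval. -/
def IsStepOn (a b : F) (φ : F → F) : Prop :=
  ∃ (n : ℕ) (x : ℕ → F), x 0 = a ∧ x n = b ∧ (∀ i < n, x i < x (i + 1)) ∧
    ∀ i < n, ∃ M : F, ∀ t ∈ Set.Ioo (x i) (x (i + 1)), φ t = M

/-- `I` is the integral of the step function `φ` over `[a,b]`, computed from
an admissible partition `a = x 0 < ⋯ < x n = b` with constant values `M i`. -/
def HasStepIntegral (a b : F) (φ : F → F) (I : F) : Prop :=
  ∃ (n : ℕ) (x : ℕ → F) (M : ℕ → F), x 0 = a ∧ x n = b ∧ (∀ i < n, x i < x (i + 1)) ∧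
    (∀ i < n, ∀ t ∈ Set.Ioo (x i) (x (i + 1)), φ t = M i) ∧
    I = ∑ i ∈ Finset.range n, M i * (x (i + 1) - x i)

/-- `S ⊆ [a,b]` has measure zero: for every `ε > 0` there is a countable family of
open intervals `(c n, d n) ⊆ [a,b]` covering `S` whose partial sums of lengths
converge to a sum less than `ε`. -/
def NullSet (a b : F) (S : Set F) : Prop :=
  ∀ ε : F, 0 < ε → ∃ c d : ℕ → F,
    (∀ n, c n ≤ d n ∧ Set.Ioo (c n) (d n) ⊆ Set.Icc a b) ∧
    S ⊆ (⋃ n, Set.Ioo (c n) (d n)) ∧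
    ∃ s : F, s < ε ∧ SeqConv (fun N => ∑ k ∈ Finset.range N, (d k - c k)) s

/-- `Q` holds almost everywhere in `[a,b]`. -/
def AEOn (a b : F) (Q : F → Prop) : Prop :=
  NullSet a b {x ∈ Set.Icc a b | ¬ Q x}

/-- `φ` is a monotonically decreasing sequence of step functions `[a,b] → P ∪ {0}`
converging to `f` almost everywhere in `[a,b]`. -/
def ApproxSeq (a b : F) (φ : ℕ → F → F) (f : F → F) : Prop :=
  (∀ n, IsStepOn a b (φ n)) ∧
  (∀ n, ∀ x ∈ Set.Icc a b, 0 ≤ φ n x) ∧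
  (∀ n, ∀ x ∈ Set.Icc a b, φ (n + 1) x ≤ φ n x) ∧
  AEOn a b fun x => SeqConv (fun n => φ n x) (f x)

/-- A nonnegative-valued function on `[a,b]` is Lebesgue measurable. -/
def LebMeasurableNN (a b : F) (f : F → F) : Prop :=
  ∃ φ : ℕ → F → F, ApproxSeq a b φ f

/-- A nonnegative-valued function on `[a,b]` has Lebesgue integral `I`:
it is Lebesgue measurable and for every monotonically decreasing sequence of
nonnegative step functions converging to `f` a.e., the sequence of their
(step) integrals converges to `I`. -/
def HasLebIntegralNN (a b : F) (f : F → F) (I : F) : Prop :=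
  LebMeasurableNN a b f ∧
    ∀ φ : ℕ → F → F, ApproxSeq a b φ f →
      ∀ J : ℕ → F, (∀ n, HasStepIntegral a b (φ n) (J n)) → SeqConv J I

/-- A function `[a,b] → F` is Lebesgue measurable (via its nonnegative parts). -/
def LebMeasurable (a b : F) (f : F → F) : Prop :=
  LebMeasurableNN a b (fun x => max (f x) 0) ∧ LebMeasurableNN a b fun x => max (-f x) 0

/-- A function `[a,b] → F` has a Lebesgue integral (via its nonnegative parts). -/
def HasLebIntegral (a b : F) (f : F → F) : Prop :=
  (∃ I : F, HasLebIntegralNN a b (fun x => max (f x) 0) I) ∧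
  ∃ I : F, HasLebIntegralNN a b (fun x => max (-f x) 0) I

/-- The characteristic function of `E`. -/
noncomputable def chi (E : Set F) : F → F := E.indicator fun _ => 1

/-- `E ⊆ [a,b]` is a measurable set: its characteristic function is Lebesgue measurable. -/
def MeasSet (a b : F) (E : Set F) : Prop := LebMeasurableNN a b (chi E)

/-- `E` has Lebesgue measure: `E` has measure zero or `χ_E` has a Lebesgue integral. -/
def HasLebMeasure (a b : F) (E : Set F) : Prop :=
  NullSet a b E ∨ ∃ I : F, HasLebIntegralNN a b (chi E) I

/-- `S` is an interval with endpoints `c ≤ d` (any of the four kinds). -/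
def IsIntervalWith (S : Set F) (c d : F) : Prop :=
  S = Set.Icc c d ∨ S = Set.Ico c d ∨ S = Set.Ioc c d ∨ S = Set.Ioo c d

/-- `S` is an interval. -/
def IsInterval (S : Set F) : Prop := ∃ c d : F, IsIntervalWith S c d

/-- `f` is continuous on `D`. -/
def ContOn (D : Set F) (f : F → F) : Prop :=
  ∀ c ∈ D, ∀ ε : F, 0 < ε → ∃ δ : F, 0 < δ ∧
    ∀ x ∈ D ∩ Set.Ioo (c - δ) (c + δ), f x - f c ∈ Set.Ioo (-ε) ε

/-- The functions `g n` converge uniformly to `f` on `D`. -/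
def UnifConvOn (D : Set F) (g : ℕ → F → F) (f : F → F) : Prop :=
  ∀ ε : F, 0 < ε → ∃ N : ℕ, ∀ n, N ≤ n → ∀ x ∈ D, f x - g n x ∈ Set.Ioo (-ε) ε

/-- `A` is a cut of `F`. -/
def IsCut (A : Set F) : Prop :=
  A.Nonempty ∧ A ≠ Set.univ ∧ ∀ x ∈ A, ∀ y ∉ A, x < y

/-- `c` is a cut point of `A`. -/
def IsCutPoint (A : Set F) (c : F) : Prop :=
  ∀ x ∈ A, ∀ y ∉ A, x ≤ c ∧ c ≤ y

variable (F) in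
/-- The Cut Axiom: every cut of `F` has a cut point. -/
def CutAxiom : Prop := ∀ A : Set F, IsCut A → ∃ c : F, IsCutPoint A c

variable (F) in
/-- Lebesgue Integral Property. -/
def LIP : Prop :=
  ∀ a b : F, a ≤ b → ∀ f : F → F, LebMeasurable a b f → HasLebIntegral a b f

variable (F) in
/-- Lebesgue Measure Property. -/
def LMP : Prop :=
  ∀ a b : F, a ≤ b → ∀ E ⊆ Set.Icc a b, MeasSet a b E → HasLebMeasure a b E

variable (F) in
/-- Littlewood's First Principle. -/
def LP1 : Prop :=
  ∀ a b : F, a ≤ b → ∀ E ⊆ Set.Icc a b, MeasSet a b E → ∀ ε : F, 0 < ε →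
    ∃ (m : ℕ) (I : ℕ → Set F), (∀ i < m, IsInterval (I i) ∧ I i ⊆ Set.Icc a b) ∧
      ∃ J : F, HasLebIntegralNN a b
        (chi ((E \ ⋃ i < m, I i) ∪ ((⋃ i < m, I i) \ E))) J ∧ J < ε

variable (F) in
/-- Littlewood's Second Principle. -/
def LP2 : Prop :=
  ∀ a b : F, a ≤ b → ∀ f : F → F, LebMeasurable a b f → ∀ ε : F, 0 < ε →
    ∃ E ⊆ Set.Icc a b, MeasSet a b E ∧ ContOn (Set.Icc a b \ E) f ∧
      ∃ J : F, HasLebIntegralNN a b (chi E) J ∧ J < ε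

variable (F) in
/-- Littlewood's Third Principle. -/
def LP3 : Prop :=
  ∀ a b : F, a ≤ b → ∀ φ : ℕ → F → F, (∀ n, LebMeasurable a b (φ n)) →
    ∀ f : F → F, AEOn a b (fun x => SeqConv (fun n => φ n x) (f x)) →
    ∀ ε : F, 0 < ε →
      ∃ E ⊆ Set.Icc a b, MeasSet a b E ∧ UnifConvOn (Set.Icc a b \ E) φ f ∧
        ∃ J : F, HasLebIntegralNN a b (chi E) J ∧ J < ε

section Aux
open MeasureTheory Filter Set

private lemma seqConv_iff_tendsto {s : ℕ → ℝ} {L : ℝ} :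
    SeqConv s L ↔ Tendsto s atTop (nhds L) := by
  rw [Metric.tendsto_atTop]
  constructor
  · intro h ε hε
    obtain ⟨N, hN⟩ := h ε hε
    refine ⟨N, fun n hn => ?_⟩
    have := hN n hn
    rw [Real.dist_eq, abs_lt]
    exact ⟨this.1, this.2⟩
  · intro h ε hε
    obtain ⟨N, hN⟩ := h ε hε
    refine ⟨N, fun n hn => ?_⟩
    have := hN n hn
    rw [Real.dist_eq, abs_lt] at this
    exact ⟨this.1, this.2⟩

private lemma part_mono {F : Type*} [Field F] [LinearOrder F] [IsStrictOrderedRing F] {x : ℕ → F} {n : ℕ}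
    (hx : ∀ i < n, x i < x (i + 1)) :
    ∀ i j, i ≤ j → j ≤ n → x i ≤ x j := by
  intro i j hij hjn
  induction j, hij using Nat.le_induction with
  | base => exact le_refl _
  | succ m him ih =>
    exact (ih (le_trans (Nat.le_succ m) hjn)).trans (hx m (Nat.lt_of_succ_le hjn)).le

private lemma part_cover {F : Type*} [Field F] [LinearOrder F] [IsStrictOrderedRing F] {x : ℕ → F} {n : ℕ}
    (hx : ∀ i < n, x i < x (i + 1)) :
    ∀ m, m ≤ n → ∀ t ∈ Set.Icc (x 0) (x m),
      (∃ i ≤ m, x i = t) ∨ ∃ i < m, t ∈ Set.Ioo (x i) (x (i + 1)) := by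
  intro m
  induction m with
  | zero => exact fun _ t ht => Or.inl ⟨0, le_refl _, le_antisymm ht.1 ht.2⟩
  | succ m ih =>
    intro hmn t ht
    rcases le_or_gt t (x m) with h | h
    · rcases ih (le_trans (Nat.le_succ m) hmn) t ⟨ht.1, h⟩ with ⟨i, him, hi⟩ | ⟨i, him, hi⟩
      · exact Or.inl ⟨i, him.trans (Nat.le_succ m), hi⟩
      · exact Or.inr ⟨i, him.trans (Nat.lt_succ_self m), hi⟩
    · rcases eq_or_lt_of_le ht.2 with h2 | h2
      · exact Or.inl ⟨m + 1, le_refl _, h2.symm⟩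
      · exact Or.inr ⟨m, Nat.lt_succ_self m, ⟨h, h2⟩⟩

private lemma hasStepIntegral_real {a b : ℝ} {φ : ℝ → ℝ} {J : ℝ}
    (h : HasStepIntegral a b φ J) :
    IntegrableOn φ (Set.Icc a b) ∧ J = ∫ t in Set.Icc a b, φ t := by
  obtain ⟨n, x, M, hx0, hxn, hlt, hval, hJ⟩ := h
  have hmono := part_mono hlt
  set ψ : ℝ → ℝ :=
    fun t => ∑ i ∈ Finset.range n, (Set.Ioo (x i) (x (i + 1))).indicator (fun _ => M i) t with hψ
  have hIoo_sub : ∀ i < n, Set.Ioo (x i) (x (i + 1)) ⊆ Set.Icc a b := by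
    intro i hi t ht
    exact ⟨hx0 ▸ (hmono 0 i (Nat.zero_le i) hi.le).trans ht.1.le,
      hxn ▸ ht.2.le.trans (hmono (i + 1) n hi (le_refl n))⟩
  have hint : IntegrableOn ψ (Set.Icc a b) := by
    apply MeasureTheory.integrable_finset_sum
    intro i _
    rw [MeasureTheory.integrable_indicator_iff measurableSet_Ioo]
    rw [MeasureTheory.integrableOn_const_iff]
    right
    calc (volume.restrict (Set.Icc a b)) (Set.Ioo (x i) (x (i + 1)))
        ≤ volume (Set.Ioo (x i) (x (i + 1))) := by
          rw [Measure.restrict_apply' measurableSet_Icc]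
          exact measure_mono Set.inter_subset_left
      _ < ⊤ := by rw [Real.volume_Ioo]; exact ENNReal.ofReal_lt_top
  have hψint : ∫ t in Set.Icc a b, ψ t = ∑ i ∈ Finset.range n, M i * (x (i + 1) - x i) := by
    rw [hψ]
    rw [MeasureTheory.integral_finset_sum]
    · apply Finset.sum_congr rfl
      intro i hi
      rw [MeasureTheory.setIntegral_indicator measurableSet_Ioo]
      rw [Set.inter_eq_self_of_subset_right (hIoo_sub i (Finset.mem_range.1 hi))]
      rw [MeasureTheory.setIntegral_const,
        Real.volume_real_Ioo_of_le (hlt i (Finset.mem_range.1 hi)).le]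
      rw [smul_eq_mul, mul_comm]
    · intro i _
      rw [MeasureTheory.integrable_indicator_iff measurableSet_Ioo,
        MeasureTheory.integrableOn_const_iff]
      right
      calc (volume.restrict (Set.Icc a b)) (Set.Ioo (x i) (x (i + 1)))
          ≤ volume (Set.Ioo (x i) (x (i + 1))) := by
            rw [Measure.restrict_apply' measurableSet_Icc]
            exact measure_mono Set.inter_subset_left
        _ < ⊤ := by rw [Real.volume_Ioo]; exact ENNReal.ofReal_lt_top
  have hae : φ =ᵐ[volume.restrict (Set.Icc a b)] ψ := by
    have hPfin : (x '' Set.Iic n).Finite := (Set.finite_Iic n).image x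
    have hP0 : volume (x '' Set.Iic n) = 0 := hPfin.measure_zero _
    have hsub : {t | ¬ φ t = ψ t} ∩ Set.Icc a b ⊆ x '' Set.Iic n := by
      rintro t ⟨hne, htIcc⟩
      by_contra htP
      rcases part_cover hlt n (le_refl n) t (by rw [hx0, hxn] at *; exact htIcc) with
        ⟨i, hin, hit⟩ | ⟨i, hin, hit⟩
      · exact htP ⟨i, hin, hit⟩
      · apply hne
        rw [hval i hin t hit]
        show M i = ∑ j ∈ Finset.range n, (Set.Ioo (x j) (x (j + 1))).indicator (fun _ => M j) t
        rw [Finset.sum_eq_single i]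
        · rw [Set.indicator_of_mem hit]
        · intro j hj hji
          apply Set.indicator_of_notMem
          intro htj
          rcases lt_or_gt_of_ne hji with h | h
          · exact absurd htj.2 (not_lt.2 ((hmono (j + 1) i h hin.le).trans hit.1.le))
          · exact absurd htj.1
              (not_lt.2 (hit.2.le.trans (hmono (i + 1) j h (Finset.mem_range.1 hj).le)))
        · intro hi; exact absurd (Finset.mem_range.2 hin) hi
    rw [Filter.EventuallyEq, MeasureTheory.ae_iff]
    rw [Measure.restrict_apply' measurableSet_Icc]
    exact measure_mono_null hsub hP0
  refine ⟨hint.congr hae.symm, ?_⟩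
  rw [hJ, ← hψint]
  exact MeasureTheory.integral_congr_ae hae.symm

end Aux
section Aux2
open MeasureTheory Filter Set

private lemma nullSet_volume {a b : ℝ} {S : Set ℝ} (h : NullSet a b S) : volume S = 0 := by
  have key : ∀ ε : ℝ, 0 < ε → volume S ≤ ENNReal.ofReal ε := by
    intro ε hε
    obtain ⟨c, d, hcd, hcov, s, hs, hconv⟩ := h ε hε
    have hPS : ∀ N, ∑ k ∈ Finset.range N, (d k - c k) ≤ s := by
      intro N
      by_contra hlt
      push_neg at hlt
      obtain ⟨N', hN'⟩ := hconv (∑ k ∈ Finset.range N, (d k - c k) - s) (by linarith)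
      have hmono : ∑ k ∈ Finset.range N, (d k - c k) ≤
          ∑ k ∈ Finset.range (max N N'), (d k - c k) := by
        apply Finset.sum_le_sum_of_subset_of_nonneg
          (Finset.range_subset_range.2 (le_max_left _ _))
        intro k _ _; linarith [(hcd k).1]
      have h2 := (hN' (max N N') (le_max_right _ _)).2
      linarith
    have h1 : volume S ≤ ∑' k, volume (Set.Ioo (c k) (d k)) :=
      (measure_mono hcov).trans (measure_iUnion_le _)
    refine h1.trans ?_
    have h2 : ∑' k, volume (Set.Ioo (c k) (d k)) ≤ ENNReal.ofReal s := by
      rw [ENNReal.tsum_eq_iSup_sum' (fun N => Finset.range N)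
        (fun t => Finset.exists_nat_subset_range t)]
      apply iSup_le
      intro N
      calc ∑ k ∈ Finset.range N, volume (Set.Ioo (c k) (d k))
          = ∑ k ∈ Finset.range N, ENNReal.ofReal (d k - c k) := by
            apply Finset.sum_congr rfl; intro k _; rw [Real.volume_Ioo]
        _ = ENNReal.ofReal (∑ k ∈ Finset.range N, (d k - c k)) := by
            rw [ENNReal.ofReal_sum_of_nonneg]
            intro k _; linarith [(hcd k).1]
        _ ≤ ENNReal.ofReal s := ENNReal.ofReal_le_ofReal (hPS N)
    exact h2.trans (ENNReal.ofReal_le_ofReal hs.le)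
  by_contra hne
  have hfin : volume S < ⊤ := (key 1 one_pos).trans_lt ENNReal.ofReal_lt_top
  have htr : 0 < (volume S).toReal := ENNReal.toReal_pos hne hfin.ne
  have h3 := key ((volume S).toReal / 2) (by linarith)
  have h4 : ENNReal.ofReal ((volume S).toReal / 2) < ENNReal.ofReal ((volume S).toReal) := by
    rw [ENNReal.ofReal_lt_ofReal_iff htr]; linarith
  rw [ENNReal.ofReal_toReal hfin.ne] at h4
  exact absurd (h3.trans_lt h4) (lt_irrefl _)

private lemma lmp_real : LMP ℝ := by
  intro a b hab E hE hmeas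
  right
  refine ⟨∫ t in Set.Icc a b, chi E t, hmeas, ?_⟩
  intro φ hφ J hJ
  obtain ⟨hstep, hnn, hdec, hae⟩ := hφ
  have hri : ∀ n, IntegrableOn (φ n) (Set.Icc a b) ∧ J n = ∫ t in Set.Icc a b, φ n t :=
    fun n => hasStepIntegral_real (hJ n)
  have h0le : ∀ n, ∀ t ∈ Set.Icc a b, φ n t ≤ φ 0 t := by
    intro n
    induction n with
    | zero => exact fun t _ => le_refl _
    | succ m ih => exact fun t ht => (hdec m t ht).trans (ih t ht)
  rw [seqConv_iff_tendsto]
  have hdct := MeasureTheory.tendsto_integral_of_dominated_convergence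
    (μ := volume.restrict (Set.Icc a b)) (F := φ) (f := chi E) (bound := φ 0)
    (fun n => (hri n).1.aestronglyMeasurable) (hri 0).1 ?_ ?_
  · exact hdct.congr (fun n => ((hri n).2).symm)
  · intro n
    filter_upwards [MeasureTheory.ae_restrict_mem measurableSet_Icc] with t ht
    rw [Real.norm_eq_abs, abs_of_nonneg (hnn n t ht)]
    exact h0le n t ht
  · have hnull := nullSet_volume hae
    have hBad : (volume.restrict (Set.Icc a b))
        {x ∈ Set.Icc a b | ¬ SeqConv (fun n => φ n x) (chi E x)} = 0 := by
      rw [Measure.restrict_apply' measurableSet_Icc]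
      exact measure_mono_null Set.inter_subset_left hnull
    filter_upwards [MeasureTheory.ae_restrict_mem measurableSet_Icc,
      (MeasureTheory.measure_eq_zero_iff_ae_notMem.mp hBad)] with t ht htb
    rw [← seqConv_iff_tendsto]
    by_contra hc
    exact htb ⟨ht, hc⟩

end Aux2
section Transfer
variable {F K : Type*} [Field F] [LinearOrder F] [IsStrictOrderedRing F] [Field K] [LinearOrder K] [IsStrictOrderedRing K]

private lemma he_lt (e : F ≃+* K) (he : ∀ x y : F, x ≤ y ↔ e x ≤ e y) :
    ∀ x y : F, x < y ↔ e x < e y := by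
  intro x y
  rw [lt_iff_not_ge, lt_iff_not_ge, he]

private lemma he_symm (e : F ≃+* K) (he : ∀ x y : F, x ≤ y ↔ e x ≤ e y) :
    ∀ u v : K, u ≤ v ↔ e.symm u ≤ e.symm v := by
  intro u v
  conv_lhs => rw [← e.apply_symm_apply u, ← e.apply_symm_apply v]
  exact (he _ _).symm

private lemma he_pos (e : F ≃+* K) (he : ∀ x y : F, x ≤ y ↔ e x ≤ e y) :
    ∀ x : F, 0 < x ↔ 0 < e x := by
  intro x
  rw [he_lt e he 0 x, map_zero]

private lemma seqConv_map (e : F ≃+* K) (he : ∀ x y : F, x ≤ y ↔ e x ≤ e y)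
    {s : ℕ → F} {L : F} (h : SeqConv s L) : SeqConv (fun n => e (s n)) (e L) := by
  intro ε' hε'
  have h0 : (0 : F) < e.symm ε' := by
    rw [he_pos e he, e.apply_symm_apply]; exact hε'
  obtain ⟨N, hN⟩ := h (e.symm ε') h0
  refine ⟨N, fun n hn => ?_⟩
  obtain ⟨h1, h2⟩ := hN n hn
  constructor
  · have := (he_lt e he _ _).1 h1
    rwa [map_neg, map_sub, e.apply_symm_apply] at this
  · have := (he_lt e he _ _).1 h2
    rwa [map_sub, e.apply_symm_apply] at this

private lemma seqConv_map_iff (e : F ≃+* K) (he : ∀ x y : F, x ≤ y ↔ e x ≤ e y)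
    {s : ℕ → F} {L : F} : SeqConv (fun n => e (s n)) (e L) ↔ SeqConv s L := by
  constructor
  · intro h
    have := seqConv_map e.symm (he_symm e he) h
    simpa using this
  · exact seqConv_map e he

private lemma nullSet_map (e : F ≃+* K) (he : ∀ x y : F, x ≤ y ↔ e x ≤ e y)
    {a b : F} {S : Set F} (h : NullSet a b S) :
    NullSet (e a) (e b) ((fun x => e x) '' S) := by
  intro ε' hε'
  have h0 : (0 : F) < e.symm ε' := by
    rw [he_pos e he, e.apply_symm_apply]; exact hε'
  obtain ⟨c, d, h1, h2, s, hs, hconv⟩ := h (e.symm ε') h0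
  refine ⟨fun n => e (c n), fun n => e (d n), ?_, ?_, e s, ?_, ?_⟩
  · intro n
    refine ⟨(he _ _).1 (h1 n).1, ?_⟩
    intro y hy
    have hy' : e.symm y ∈ Set.Ioo (c n) (d n) := by
      constructor
      · have := (he_lt e.symm (he_symm e he) _ _).1 hy.1
        rwa [e.symm_apply_apply] at this
      · have := (he_lt e.symm (he_symm e he) _ _).1 hy.2
        rwa [e.symm_apply_apply] at this
    obtain ⟨hl, hr⟩ := (h1 n).2 hy'
    constructor
    · have := (he _ _).1 hl
      rwa [e.apply_symm_apply] at this
    · have := (he _ _).1 hr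
      rwa [e.apply_symm_apply] at this
  · rintro y ⟨x, hxS, rfl⟩
    obtain ⟨t, ⟨n, hn⟩, hxt⟩ := h2 hxS
    subst hn
    exact Set.mem_iUnion.2 ⟨n, (he_lt e he _ _).1 hxt.1, (he_lt e he _ _).1 hxt.2⟩
  · have := (he_lt e he _ _).1 hs
    rwa [e.apply_symm_apply] at this
  · have := seqConv_map e he hconv
    convert this using 2 with N
    rw [map_sum]
    exact Finset.sum_congr rfl fun k _ => (map_sub e (d k) (c k)).symm

private lemma stepOn_map (e : F ≃+* K) (he : ∀ x y : F, x ≤ y ↔ e x ≤ e y)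
    {a b : F} {φ : F → F} (h : IsStepOn a b φ) :
    IsStepOn (e a) (e b) (fun y => e (φ (e.symm y))) := by
  obtain ⟨n, x, hx0, hxn, hlt, hval⟩ := h
  refine ⟨n, fun i => e (x i), show e (x 0) = e a by rw [hx0],
    show e (x n) = e b by rw [hxn],
    fun i hi => (he_lt e he _ _).1 (hlt i hi), ?_⟩
  intro i hi
  obtain ⟨M, hM⟩ := hval i hi
  refine ⟨e M, fun t ht => ?_⟩
  have ht' : e.symm t ∈ Set.Ioo (x i) (x (i + 1)) := by
    constructor
    · have := (he_lt e.symm (he_symm e he) _ _).1 ht.1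
      rwa [e.symm_apply_apply] at this
    · have := (he_lt e.symm (he_symm e he) _ _).1 ht.2
      rwa [e.symm_apply_apply] at this
  show e (φ (e.symm t)) = e M
  rw [hM _ ht']

private lemma stepInt_map (e : F ≃+* K) (he : ∀ x y : F, x ≤ y ↔ e x ≤ e y)
    {a b J : F} {φ : F → F} (h : HasStepIntegral a b φ J) :
    HasStepIntegral (e a) (e b) (fun y => e (φ (e.symm y))) (e J) := by
  obtain ⟨n, x, M, hx0, hxn, hlt, hval, hJ⟩ := h
  refine ⟨n, fun i => e (x i), fun i => e (M i), show e (x 0) = e a by rw [hx0],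
    show e (x n) = e b by rw [hxn],
    fun i hi => (he_lt e he _ _).1 (hlt i hi), ?_, ?_⟩
  · intro i hi t ht
    have ht' : e.symm t ∈ Set.Ioo (x i) (x (i + 1)) := by
      constructor
      · have := (he_lt e.symm (he_symm e he) _ _).1 ht.1
        rwa [e.symm_apply_apply] at this
      · have := (he_lt e.symm (he_symm e he) _ _).1 ht.2
        rwa [e.symm_apply_apply] at this
    show e (φ (e.symm t)) = e (M i)
    rw [hval i hi _ ht']
  · show e J = ∑ i ∈ Finset.range n, e (M i) * (e (x (i + 1)) - e (x i))
    rw [hJ, map_sum]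
    exact Finset.sum_congr rfl fun i _ => by rw [map_mul, map_sub]

private lemma chi_map (e : F ≃+* K) (E : Set F) (y : K) :
    chi ((fun x => e x) '' E) y = e (chi E (e.symm y)) := by
  unfold chi
  by_cases hy : e.symm y ∈ E
  · rw [Set.indicator_of_mem hy, Set.indicator_of_mem ((Set.mem_image _ _ _).2 ⟨e.symm y, hy, e.apply_symm_apply y⟩),
      map_one]
  · rw [Set.indicator_of_notMem hy, Set.indicator_of_notMem ?_, map_zero]
    rintro ⟨x, hx, rfl⟩
    exact hy (by simpa using hx)

private lemma mem_Icc_symm (e : F ≃+* K) (he : ∀ x y : F, x ≤ y ↔ e x ≤ e y)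
    {a b : F} {y : K} (hy : y ∈ Set.Icc (e a) (e b)) : e.symm y ∈ Set.Icc a b := by
  constructor
  · have := (he_symm e he _ _).1 hy.1
    rwa [e.symm_apply_apply] at this
  · have := (he_symm e he _ _).1 hy.2
    rwa [e.symm_apply_apply] at this

private lemma approx_map (e : F ≃+* K) (he : ∀ x y : F, x ≤ y ↔ e x ≤ e y)
    {a b : F} {φ : ℕ → F → F} {f : F → F} (h : ApproxSeq a b φ f) :
    ApproxSeq (e a) (e b) (fun n y => e (φ n (e.symm y))) (fun y => e (f (e.symm y))) := by
  obtain ⟨h1, h2, h3, h4⟩ := h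
  refine ⟨fun n => stepOn_map e he (h1 n), ?_, ?_, ?_⟩
  · intro n y hy
    have := (he _ _).1 (h2 n _ (mem_Icc_symm e he hy))
    rwa [map_zero] at this
  · intro n y hy
    exact (he _ _).1 (h3 n _ (mem_Icc_symm e he hy))
  · unfold AEOn at h4 ⊢
    have := nullSet_map e he h4
    convert this using 1
    ext y
    simp only [Set.mem_setOf_eq, Set.mem_image]
    constructor
    · rintro ⟨hyIcc, hnc⟩
      refine ⟨e.symm y, ⟨mem_Icc_symm e he hyIcc, ?_⟩, e.apply_symm_apply y⟩
      intro hc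
      exact hnc (seqConv_map e he hc)
    · rintro ⟨x, ⟨hxIcc, hnc⟩, rfl⟩
      refine ⟨⟨(he _ _).1 hxIcc.1, (he _ _).1 hxIcc.2⟩, ?_⟩
      intro hc
      apply hnc
      have : SeqConv (fun n => e (φ n x)) (e (f x)) := by
        simpa [e.symm_apply_apply] using hc
      exact (seqConv_map_iff e he).1 this

end Transfer
section Helpers
variable {F : Type*} [Field F] [LinearOrder F] [IsStrictOrderedRing F]

private lemma nullSet_of_empty (a b : F) {S : Set F} (hS : S ⊆ ∅) : NullSet a b S := by
  intro ε hε
  refine ⟨fun _ => a, fun _ => a, fun n => ⟨le_refl a, by simp⟩, ?_, 0, hε, ?_⟩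
  · intro y hy
    exact absurd (hS hy) (Set.notMem_empty y)
  · intro δ hδ
    refine ⟨0, fun n _ => ?_⟩
    simp only [sub_self, Finset.sum_const_zero, sub_zero]
    exact ⟨neg_neg_iff_pos.2 hδ, hδ⟩

private lemma nullSet_not_mem_left {a b : F} {S : Set F} (h : NullSet a b S) : a ∉ S := by
  intro haS
  obtain ⟨c, d, h1, h2, _⟩ := h 1 one_pos
  obtain ⟨t, ⟨n, hn⟩, hat⟩ := h2 haS
  subst hn
  have hca : c n < a := hat.1
  have hmem : (c n + a) / 2 ∈ Set.Ioo (c n) (d n) :=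
    ⟨by linarith, by linarith [hat.2]⟩
  have := ((h1 n).2 hmem).1
  linarith

private lemma ca_nat_unbounded (h : CutAxiom F) : ∀ x : F, ∃ n : ℕ, x ≤ n := by
  by_contra hc
  push_neg at hc
  obtain ⟨x, hx⟩ := hc
  set A : Set F := {y | ∃ n : ℕ, y < n} with hA
  have hcut : IsCut A := by
    refine ⟨⟨0, 1, by norm_num⟩, ?_, ?_⟩
    · intro hAu
      have : x ∈ A := hAu ▸ Set.mem_univ x
      obtain ⟨n, hn⟩ := this
      exact absurd hn (not_lt.2 (hx n).le)
    · rintro y ⟨n, hn⟩ z hz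
      have : (n : F) ≤ z := le_of_not_gt fun hzn => hz ⟨n, hzn⟩
      exact lt_of_lt_of_le hn this
  obtain ⟨c, hc⟩ := h A hcut
  have hnc : ∀ n : ℕ, (n : F) ≤ c := by
    intro n
    have hmem : (n : F) ∈ A := ⟨n + 1, by push_cast; linarith⟩
    have hxA : x ∉ A := fun ⟨m, hm⟩ => absurd hm (not_lt.2 (hx m).le)
    exact (hc _ hmem x hxA).1
  have hc1 : c - 1 ∉ A := by
    rintro ⟨n, hn⟩
    have := hnc (n + 1)
    push_cast at this
    linarith
  have h0A : (0 : F) ∈ A := ⟨1, by norm_num⟩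
  have := (hc 0 h0A (c - 1) hc1).2
  linarith

private def archOfNat (h : ∀ x : F, ∃ n : ℕ, x ≤ n) : Archimedean F := by
  constructor
  intro x y hy
  obtain ⟨n, hn⟩ := h (x / y)
  refine ⟨n, ?_⟩
  rw [nsmul_eq_mul]
  rwa [div_le_iff₀ hy] at hn

end Helpers
section CAtoLMP

private lemma ca_to_lmp {F : Type*} [Field F] [LinearOrder F] [IsStrictOrderedRing F] (hCA : CutAxiom F) : LMP F := by
  letI : Archimedean F := archOfNat (ca_nat_unbounded hCA)
  let ρ0 : F →+*o ℝ := LinearOrderedField.inducedOrderRingHom F ℝ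
  let ρ : F →+* ℝ := ρ0.toRingHom
  have hmono : Monotone ρ := ρ0.monotone'
  have hinj : Function.Injective ρ := ρ.injective
  have hstrict : StrictMono ρ := hmono.strictMono_of_injective hinj
  have hrat : ∀ q : ℚ, ρ (q : F) = (q : ℝ) := fun q => map_ratCast ρ q
  have hsurj : Function.Surjective ρ := by
    intro r
    set A : Set F := {z | (ρ z : ℝ) < r} with hA
    have hcut : IsCut A := by
      refine ⟨?_, ?_, ?_⟩
      · obtain ⟨q, hq⟩ := exists_rat_lt r
        exact ⟨(q : F), by simp only [hA, Set.mem_setOf_eq, hrat]; exact hq⟩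
      · obtain ⟨q, hq⟩ := exists_rat_gt r
        intro hAu
        have : (q : F) ∈ A := hAu ▸ Set.mem_univ _
        rw [hA, Set.mem_setOf_eq, hrat] at this
        exact absurd hq (not_lt.2 this.le)
      · intro z hz w hw
        have : r ≤ ρ w := le_of_not_gt hw
        exact hstrict.lt_iff_lt.1 (lt_of_lt_of_le hz this)
    obtain ⟨c, hc⟩ := hCA A hcut
    refine ⟨c, ?_⟩
    by_contra hne
    rcases lt_or_gt_of_ne hne with h | h
    · obtain ⟨q, hq1, hq2⟩ := exists_rat_btwn h
      have hqA : (q : F) ∈ A := by rw [hA, Set.mem_setOf_eq, hrat]; exact hq2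
      obtain ⟨q', hq'⟩ := exists_rat_gt r
      have hq'A : (q' : F) ∉ A := by
        rw [hA, Set.mem_setOf_eq, hrat]; exact not_lt.2 hq'.le
      have := (hc _ hqA _ hq'A).1
      have := hmono this
      rw [hrat] at this
      linarith
    · obtain ⟨q, hq1, hq2⟩ := exists_rat_btwn h
      have hqA : (q : F) ∉ A := by
        rw [hA, Set.mem_setOf_eq, hrat]; exact not_lt.2 hq1.le
      obtain ⟨q', hq'⟩ := exists_rat_lt r
      have hq'A : (q' : F) ∈ A := by rw [hA, Set.mem_setOf_eq, hrat]; exact hq'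
      have := (hc _ hq'A _ hqA).2
      have := hmono this
      rw [hrat] at this
      linarith
  let e : F ≃+* ℝ := RingEquiv.ofBijective ρ ⟨hinj, hsurj⟩
  have he : ∀ x y : F, x ≤ y ↔ e x ≤ e y := fun x y => ⟨fun h => hmono h, fun h => hstrict.le_iff_le.1 h⟩
  -- now prove LMP
  intro a b hab E hE hmeas
  have hmeas' : MeasSet (e a) (e b) ((fun x => e x) '' E) := by
    obtain ⟨φ, hφ⟩ := hmeas
    refine ⟨fun n y => e (φ n (e.symm y)), ?_⟩
    have := approx_map e he hφ
    have hfix : (fun y => e (chi E (e.symm y))) = chi ((fun x => e x) '' E) :=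
      funext fun y => (chi_map e E y).symm
    rwa [hfix] at this
  have hsub' : (fun x => e x) '' E ⊆ Set.Icc (e a) (e b) := by
    rintro y ⟨x, hx, rfl⟩
    obtain ⟨h1, h2⟩ := hE hx
    exact ⟨(he _ _).1 h1, (he _ _).1 h2⟩
  have h2 := lmp_real (e a) (e b) ((he a b).1 hab) ((fun x => e x) '' E) hsub' hmeas'
  rcases h2 with hnull | ⟨I', hI'⟩
  · left
    have := nullSet_map e.symm (he_symm e he) hnull
    have hs : (fun u => e.symm u) '' ((fun x => e x) '' E) = E := by
      rw [Set.image_image]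
      simp only [RingEquiv.symm_apply_apply, Set.image_id']
    rw [e.symm_apply_apply, e.symm_apply_apply, hs] at this
    exact this
  · right
    refine ⟨e.symm I', hmeas, ?_⟩
    intro φ hφ J hJ
    have hφ' := approx_map e he hφ
    have hfix : (fun y => e (chi E (e.symm y))) = chi ((fun x => e x) '' E) :=
      funext fun y => (chi_map e E y).symm
    rw [hfix] at hφ'
    have hsc := hI'.2 _ hφ' (fun n => e (J n)) (fun n => stepInt_map e he (hJ n))
    have := seqConv_map e.symm (he_symm e he) hsc
    simpa using this

end CAtoLMP
section LMPtoCA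
variable {F : Type*} [Field F] [LinearOrder F] [IsStrictOrderedRing F]

private lemma step_if {a b u : F} (hau : a < u) (hub : u < b) :
    IsStepOn a b (fun y => if y ≤ u then (1 : F) else 0) := by
  refine ⟨2, fun i => if i = 0 then a else if i = 1 then u else b, by norm_num, by norm_num,
    ?_, ?_⟩
  · intro i hi
    interval_cases i <;> simpa
  · intro i hi
    interval_cases i
    · refine ⟨1, fun t ht => ?_⟩
      norm_num at ht
      simp [ht.2.le]
    · refine ⟨0, fun t ht => ?_⟩
      norm_num at ht
      simp [not_le.2 ht.1]

private lemma stepInt_if {a b u : F} (hau : a < u) (hub : u < b) :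
    HasStepIntegral a b (fun y => if y ≤ u then (1 : F) else 0) (u - a) := by
  refine ⟨2, fun i => if i = 0 then a else if i = 1 then u else b,
    fun i => if i = 0 then 1 else 0, by norm_num, by norm_num, ?_, ?_, ?_⟩
  · intro i hi
    interval_cases i <;> simpa
  · intro i hi
    interval_cases i
    · intro t ht
      norm_num at ht
      show (if t ≤ u then (1:F) else 0) = if (0:ℕ) = 0 then (1:F) else 0
      rw [if_pos ht.2.le, if_pos rfl]
    · intro t ht
      norm_num at ht
      show (if t ≤ u then (1:F) else 0) = if (1:ℕ) = 0 then (1:F) else 0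
      rw [if_neg (not_le.2 ht.1), if_neg one_ne_zero]
  · rw [Finset.sum_range_succ, Finset.sum_range_succ, Finset.sum_range_zero]
    norm_num

private lemma seqConv_eventually_const {s : ℕ → F} {L : F}
    (h : ∃ N, ∀ n, N ≤ n → s n = L) : SeqConv s L := by
  obtain ⟨N, hN⟩ := h
  intro ε hε
  refine ⟨N, fun n hn => ?_⟩
  rw [hN n hn, sub_self]
  exact ⟨neg_neg_iff_pos.2 hε, hε⟩

private lemma antitone_of_succ {u : ℕ → F} (h : ∀ n, u (n + 1) ≤ u n) :
    ∀ m n, m ≤ n → u n ≤ u m := by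
  intro m n hmn
  induction n, hmn using Nat.le_induction with
  | base => exact le_refl _
  | succ k hk ih => exact (h k).trans ih

private lemma lmp_contra (hLMP : LMP F)
    {a b : F} (hab : a < b) {u : ℕ → F} (hdec : ∀ n, u (n + 1) ≤ u n)
    (hau : ∀ n, a < u n) (hub : ∀ n, u n < b)
    {E : Set F} (hEsub : E ⊆ Set.Icc a b) (haE : a ∈ E)
    (hEle : ∀ y ∈ E, ∀ n, y ≤ u n)
    (hEgt : ∀ y, y ∈ Set.Icc a b → y ∉ E → ∃ N, ∀ n, N ≤ n → u n < y)
    (hnoconv : ∀ I : F, ¬ SeqConv (fun n => u n - a) I) : False := by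
  set φ : ℕ → F → F := fun n y => if y ≤ u n then (1 : F) else 0 with hφ
  have happrox : ApproxSeq a b φ (chi E) := by
    refine ⟨fun n => step_if (hau n) (hub n), ?_, ?_, ?_⟩
    · intro n y _
      simp only [hφ]
      split <;> norm_num
    · intro n y _
      simp only [hφ]
      split_ifs with h1 h2
      · exact le_refl _
      · exact absurd (h1.trans (hdec n)) h2
      · norm_num
      · exact le_refl _
    · apply nullSet_of_empty
      intro y hy
      exfalso
      apply hy.2
      by_cases hyE : y ∈ E
      · have hchi : chi E y = 1 := Set.indicator_of_mem hyE _
        apply seqConv_eventually_const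
        refine ⟨0, fun n _ => ?_⟩
        simp only [hφ]
        rw [if_pos (hEle y hyE n), hchi]
      · have hchi : chi E y = 0 := Set.indicator_of_notMem hyE _
        obtain ⟨N, hN⟩ := hEgt y hy.1 hyE
        apply seqConv_eventually_const
        refine ⟨N, fun n hn => ?_⟩
        simp only [hφ]
        rw [if_neg (not_le.2 (hN n hn)), hchi]
  have hmeas : MeasSet a b E := ⟨φ, happrox⟩
  rcases hLMP a b hab.le E hEsub hmeas with hnull | ⟨I, hI⟩
  · exact nullSet_not_mem_left hnull haE
  · exact hnoconv I
      (hI.2 φ happrox (fun n => u n - a) (fun n => stepInt_if (hau n) (hub n)))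

private lemma nonarch_not_lmp {x : F} (hx : ∀ n : ℕ, (n : F) < x) (hLMP : LMP F) : False := by
  have hx0 : (0 : F) < x := by simpa using hx 0
  set u : ℕ → F := fun n => ((n : F) + 1)⁻¹ with hu
  have hupos : ∀ n, 0 < u n := by
    intro n; simp only [hu]; positivity
  have hustrict : ∀ n, u (n + 1) < u n := by
    intro n
    simp only [hu]
    apply inv_strictAnti₀
    · positivity
    · push_cast; linarith
  have hdec : ∀ n, u (n + 1) ≤ u n := fun n => (hustrict n).le
  have hchain := antitone_of_succ hdec
  have hu0 : u 0 = 1 := by simp only [hu]; norm_num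
  have hub : ∀ n, u n < 2 := by
    intro n
    have := hchain 0 n (Nat.zero_le n)
    rw [hu0] at this
    linarith
  set E : Set F := {y | y ∈ Set.Icc (0 : F) 2 ∧ ∀ n : ℕ, y < u n} with hE
  refine lmp_contra (E := E) hLMP (show (0 : F) < 2 by norm_num) hdec hupos hub
    (fun y hy => hy.1) ⟨⟨le_refl 0, by norm_num⟩, fun n => hupos n⟩
    (fun y hy n => (hy.2 n).le) ?_ ?_
  · intro y hyIcc hyE
    have hex : ∃ n, ¬ y < u n := by
      by_contra hall
      push_neg at hall
      exact hyE ⟨hyIcc, hall⟩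
    obtain ⟨n0, hn0⟩ := hex
    rw [not_lt] at hn0
    refine ⟨n0 + 1, fun n hn => ?_⟩
    exact lt_of_le_of_lt (hchain (n0 + 1) n hn) (lt_of_lt_of_le (hustrict n0) hn0)
  · intro I hSC
    obtain ⟨N, hN⟩ := hSC x⁻¹ (inv_pos.2 hx0)
    obtain ⟨h1l, h1r⟩ := hN N le_rfl
    obtain ⟨h2l, h2r⟩ := hN (N + 1) (Nat.le_succ N)
    set P : F := ((N : F) + 1) * ((N : F) + 2) with hP
    have hPpos : (0 : F) < P := by simp only [hP]; positivity
    have hdiff : u N - u (N + 1) = P⁻¹ := by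
      have h1 : ((N : F) + 1) ≠ 0 := by positivity
      have h2 : ((N : F) + 2) ≠ 0 := by positivity
      simp only [hu, hP]
      push_cast
      field_simp
      ring_nf
    have hxP : 2 * P < x := by
      have h := hx (2 * (N + 1) * (N + 2))
      push_cast at h
      simp only [hP]
      nlinarith [h]
    have hxinv : x⁻¹ < (2 * P)⁻¹ := inv_strictAnti₀ (by positivity) hxP
    have hhalf : (2 * P)⁻¹ + (2 * P)⁻¹ = P⁻¹ := by
      have : P ≠ 0 := ne_of_gt hPpos
      field_simp
      ring_nf
    have hkey : u N - u (N + 1) < x⁻¹ + x⁻¹ := by linarith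
    rw [hdiff] at hkey
    linarith

end LMPtoCA
section ArchGap

private lemma arch_gap_not_lmp {F : Type*} [Field F] [LinearOrder F] [IsStrictOrderedRing F]
    (hnat : ∀ x : F, ∃ n : ℕ, x ≤ n)
    {A : Set F} (hcut : IsCut A) (hnocp : ∀ c : F, ¬ IsCutPoint A c)
    (hLMP : LMP F) : False := by
  letI : Archimedean F := archOfNat hnat
  let ρ0 : F →+*o ℝ := LinearOrderedField.inducedOrderRingHom F ℝ
  let ρ : F →+* ℝ := ρ0.toRingHom
  have hmono : Monotone ρ := ρ0.monotone'
  have hstrict : StrictMono ρ := hmono.strictMono_of_injective ρ.injective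
  have hrat : ∀ q : ℚ, ρ (q : F) = (q : ℝ) := fun q => map_ratCast ρ q
  -- structure of the gap
  obtain ⟨b, hb⟩ := (Set.ne_univ_iff_exists_notMem A).1 hcut.2.1
  obtain ⟨a, ha⟩ := hcut.1
  have hab : a < b := hcut.2.2 a ha b hb
  have hnomax : ∀ z ∈ A, ∃ w ∈ A, z < w := by
    intro z hz
    have hz' := hnocp z
    unfold IsCutPoint at hz'
    push_neg at hz'
    obtain ⟨p, hp, w, hw, himp⟩ := hz'
    rcases le_or_gt p z with hpz | hzp
    · exact absurd (hcut.2.2 z hz w hw) (not_lt.2 (himp hpz).le)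
    · exact ⟨p, hp, hzp⟩
  have hnomin : ∀ z ∉ A, ∃ w ∉ A, w < z := by
    intro z hz
    have hz' := hnocp z
    unfold IsCutPoint at hz'
    push_neg at hz'
    obtain ⟨p, hp, w, hw, himp⟩ := hz'
    exact ⟨w, hw, himp (hcut.2.2 p hp z hz).le⟩
  have hbdd : BddAbove (ρ '' A) := by
    refine ⟨ρ b, ?_⟩
    rintro y ⟨z, hzA, rfl⟩
    exact hmono (hcut.2.2 z hzA b hb).le
  have hne : (ρ '' A).Nonempty := ⟨ρ a, a, ha, rfl⟩
  set r : ℝ := sSup (ρ '' A) with hr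
  have hAlt : ∀ z ∈ A, ρ z < r := by
    intro z hz
    obtain ⟨w, hw, hzw⟩ := hnomax z hz
    exact lt_of_lt_of_le (hstrict hzw) (le_csSup hbdd ⟨w, hw, rfl⟩)
  have hCge : ∀ z ∉ A, r ≤ ρ z := by
    intro z hz
    apply csSup_le hne
    rintro y ⟨p, hp, rfl⟩
    exact hmono (hcut.2.2 p hp z hz).le
  have hCgt : ∀ z ∉ A, r < ρ z := by
    intro z hz
    obtain ⟨w, hw, hwz⟩ := hnomin z hz
    exact lt_of_le_of_lt (hCge w hw) (hstrict hwz)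
  -- the approximating sequence from above
  have hqex : ∀ n : ℕ, ∃ q : ℚ, r < (q : ℝ) ∧ (q : ℝ) < min (ρ b) (r + (1 / 2) ^ n) := by
    intro n
    exact exists_rat_btwn (lt_min (hCgt b hb)
      (lt_add_of_pos_right r (by positivity : (0 : ℝ) < (1 / 2) ^ n)))
  choose q hq1 hq2 using hqex
  set v : ℕ → F := fun n => ((q n : ℚ) : F) with hv
  have hρv : ∀ n, ρ (v n) = (q n : ℝ) := fun n => hrat (q n)
  let u : ℕ → F := fun n => Nat.rec (v 0) (fun k uk => min uk (v (k + 1))) n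
  have hu0 : u 0 = v 0 := rfl
  have husucc : ∀ n, u (n + 1) = min (u n) (v (n + 1)) := fun n => rfl
  have hdecu : ∀ n, u (n + 1) ≤ u n := by
    intro n; rw [husucc]; exact min_le_left _ _
  have huv : ∀ n, u n ≤ v n := by
    intro n
    cases n with
    | zero => exact le_refl _
    | succ k => rw [husucc]; exact min_le_right _ _
  have hru : ∀ n, r < ρ (u n) := by
    intro n
    induction n with
    | zero => rw [hu0, hρv]; exact hq1 0
    | succ k ih =>
      rw [husucc, hmono.map_min]
      exact lt_min ih (by rw [hρv]; exact hq1 (k + 1))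
  have hub : ∀ n, ρ (u n) ≤ r + (1 / 2) ^ n := by
    intro n
    have := hmono (huv n)
    rw [hρv] at this
    exact this.trans ((hq2 n).le.trans (min_le_right _ _))
  have hub2 : ∀ n, u n < b := by
    intro n
    have h1 : ρ (u n) < ρ b := by
      have := hmono (huv n)
      rw [hρv] at this
      exact lt_of_le_of_lt this ((hq2 n).trans_le (min_le_left _ _))
    exact hstrict.lt_iff_lt.1 h1
  have hau : ∀ n, a < u n := by
    intro n
    have h1 : ρ a < ρ (u n) := lt_trans (hAlt a ha) (hru n)
    exact hstrict.lt_iff_lt.1 h1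
  -- the set E
  set E : Set F := A ∩ Set.Icc a b with hE
  refine lmp_contra (E := E) hLMP hab hdecu hau hub2 Set.inter_subset_right
    ⟨ha, le_refl a, hab.le⟩ ?_ ?_ ?_
  · intro y hy n
    have h1 : ρ y < ρ (u n) := lt_trans (hAlt y hy.1) (hru n)
    exact (hstrict.lt_iff_lt.1 h1).le
  · intro y hyIcc hyE
    have hyA : y ∉ A := fun hyA => hyE ⟨hyA, hyIcc⟩
    have hry : r < ρ y := hCgt y hyA
    obtain ⟨n0, hn0⟩ := exists_pow_lt_of_lt_one (sub_pos.2 hry)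
      (by norm_num : (1 / 2 : ℝ) < 1)
    refine ⟨n0, fun n hn => ?_⟩
    have h1 : ρ (u n) < ρ y := by
      have h2 : ((1 : ℝ) / 2) ^ n ≤ (1 / 2) ^ n0 :=
        pow_le_pow_of_le_one (by norm_num) (by norm_num) hn
      have := hub n
      linarith
    exact hstrict.lt_iff_lt.1 h1
  · intro I hSC
    set L : F := I + a with hL
    by_cases hLA : L ∈ A
    · have hLlt : ρ L < r := hAlt L hLA
      obtain ⟨q', hq'1, hq'2⟩ := exists_rat_btwn hLlt
      set ε : F := (q' : F) - L with hε
      have hρε : ρ ε = (q' : ℝ) - ρ L := by rw [hε, map_sub, hrat]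
      have hεpos : 0 < ε := by
        have : ρ 0 < ρ ε := by rw [map_zero, hρε]; linarith
        exact hstrict.lt_iff_lt.1 this
      obtain ⟨N, hN⟩ := hSC ε hεpos
      have hmem := hN N le_rfl
      have h2 : u N - a - I < ε := hmem.2
      have h3 : ε < u N - a - I := by
        have hρ3 : ρ ε < ρ (u N - a - I) := by
          rw [hρε, map_sub, map_sub]
          have : ρ L = ρ I + ρ a := by rw [hL, map_add]
          have h4 := hru N
          linarith
        exact hstrict.lt_iff_lt.1 hρ3
      linarith
    · have hLgt : r < ρ L := hCgt L hLA
      obtain ⟨q', hq'1, hq'2⟩ := exists_rat_btwn hLgt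
      set ε : F := L - (q' : F) with hε
      have hρε : ρ ε = ρ L - (q' : ℝ) := by rw [hε, map_sub, hrat]
      have hεpos : 0 < ε := by
        have : ρ 0 < ρ ε := by rw [map_zero, hρε]; linarith
        exact hstrict.lt_iff_lt.1 this
      obtain ⟨n0, hn0⟩ := exists_pow_lt_of_lt_one (sub_pos.2 hq'1)
        (by norm_num : (1 / 2 : ℝ) < 1)
      obtain ⟨N, hN⟩ := hSC ε hεpos
      have hmem := hN (max N n0) (le_max_left _ _)
      have h2 : -ε < u (max N n0) - a - I := hmem.1
      have h3 : u (max N n0) - a - I < -ε := by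
        have hρ3 : ρ (u (max N n0) - a - I) < ρ (-ε) := by
          rw [map_neg, hρε, map_sub, map_sub]
          have hL4 : ρ L = ρ I + ρ a := by rw [hL, map_add]
          have h4 := hub (max N n0)
          have h5 : ((1 : ℝ) / 2) ^ (max N n0) ≤ (1 / 2) ^ n0 :=
            pow_le_pow_of_le_one (by norm_num) (by norm_num) (le_max_right _ _)
          linarith
        exact hstrict.lt_iff_lt.1 hρ3
      linarith

end ArchGap
theorem cutAxiom_iff_lebesgueMeasureProperty (F : Type*) [Field F] [LinearOrder F] [IsStrictOrderedRing F] :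
    CutAxiom F ↔ LMP F := by
  constructor
  · exact ca_to_lmp
  · intro hLMP
    by_contra hCA
    unfold CutAxiom at hCA
    push_neg at hCA
    obtain ⟨A, hcut, hnocp⟩ := hCA
    by_cases hnat : ∀ x : F, ∃ n : ℕ, x ≤ n
    · exact arch_gap_not_lmp hnat hcut hnocp hLMP
    · push_neg at hnat
      obtain ⟨x, hx⟩ := hnat
      exact nonarch_not_lmp hx hLMP

end Littlewood
end

section
/- If a linearly ordered field F satisfies the Cut Axiom (CA), then F satisfies the Lebesgue Integral Property (LIP): for all a ≤ b in F, every Lebesgue measurable function [a,b] → F has a Lebesgue integral. -/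
namespace Littlewood

variable {F : Type*} [Field F] [LinearOrder F] [IsStrictOrderedRing F]

attribute [local instance] Classical.propDecidable

/-! ### Basic sequence lemmas -/

lemma chain_le {g : ℕ → F} (h : ∀ n, g (n + 1) ≤ g n) :
    ∀ n m, n ≤ m → g m ≤ g n := by
  intro n m hnm
  induction m with
  | zero => simp_all
  | succ k ih =>
    rcases Nat.lt_or_ge n (k+1) with h1 | h1
    · exact (h k).trans (ih (Nat.lt_succ_iff.mp h1))
    · have : n = k + 1 := le_antisymm hnm h1
      simp [this]

lemma seqConv_le_of_antitone {g : ℕ → F} {L : F} (hd : ∀ n m, n ≤ m → g m ≤ g n)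
    (hc : SeqConv g L) : ∀ n, L ≤ g n := by
  intro n
  by_contra hlt
  push_neg at hlt
  obtain ⟨N, hN⟩ := hc (L - g n) (by linarith)
  have h1 := hN (max n N) (le_max_right _ _)
  have h2 := hd n (max n N) (le_max_left _ _)
  simp only [Set.mem_Ioo] at h1
  linarith [h1.1]

lemma seqConv_ge_of_monotone {g : ℕ → F} {L : F} (hd : ∀ n m, n ≤ m → g n ≤ g m)
    (hc : SeqConv g L) : ∀ n, g n ≤ L := by
  intro n
  by_contra hlt
  push_neg at hlt
  obtain ⟨N, hN⟩ := hc (g n - L) (by linarith)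
  have h1 := hN (max n N) (le_max_right _ _)
  have h2 := hd n (max n N) (le_max_left _ _)
  simp only [Set.mem_Ioo] at h1
  linarith [h1.2]

/-! ### Consequences of the Cut Axiom -/

lemma exists_lim_of_antitone (hCA : CutAxiom F) {J : ℕ → F} {L0 : F}
    (hd : ∀ n m, n ≤ m → J m ≤ J n) (hb : ∀ n, L0 ≤ J n) :
    ∃ L : F, SeqConv J L ∧ ∀ n, L ≤ J n := by
  set A : Set F := {x | ∀ n, x < J n} with hA
  have hdown : ∀ x ∈ A, ∀ y : F, y ≤ x → y ∈ A := fun x hx y hyx n => lt_of_le_of_lt hyx (hx n)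
  have hne : A.Nonempty := ⟨L0 - 1, fun n => by have := hb n; linarith⟩
  have hproper : A ≠ Set.univ := by
    intro h
    have : J 0 ∈ A := h ▸ Set.mem_univ _
    exact absurd (this 0) (lt_irrefl _)
  obtain ⟨c, hc⟩ := hCA A ⟨hne, hproper, fun x hx y hy => by
    by_contra h; push_neg at h; exact hy (hdown x hx y h)⟩
  have hmemlt : ∀ x : F, x < c → x ∈ A := by
    intro x hx
    by_contra hxA
    obtain ⟨a0, ha0⟩ := hne
    exact absurd (hc a0 ha0 x hxA).2 (not_le.mpr hx)
  have hnotmem : ∀ y : F, c < y → y ∉ A := by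
    intro y hy hyA
    exact absurd (hc y hyA (J 0) (fun h => lt_irrefl _ (h 0))).1 (not_le.mpr hy)
  have hcle : ∀ n, c ≤ J n := by
    intro n
    by_contra h
    push_neg at h
    have hm : (J n + c) / 2 ∈ A := hmemlt _ (by linarith)
    have := hm n
    linarith
  refine ⟨c, fun ε hε => ?_, hcle⟩
  have hy : c + ε / 2 ∉ A := hnotmem _ (by linarith)
  simp only [hA, Set.mem_setOf_eq, not_forall, not_lt] at hy
  obtain ⟨N, hN⟩ := hy
  refine ⟨N, fun n hn => ?_⟩
  have h1 := hd N n hn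
  have h2 := hcle n
  simp only [Set.mem_Ioo]
  constructor <;> linarith

/-- Heine–Borel for `[a,b]` from the Cut Axiom. -/
lemma heine_borel (hCA : CutAxiom F) {a b : F} (hab : a ≤ b) {ι : Type*} (u v : ι → F)
    (hcov : ∀ y ∈ Set.Icc a b, ∃ i, y ∈ Set.Ioo (u i) (v i)) :
    ∃ t : Finset ι, ∀ y ∈ Set.Icc a b, ∃ i ∈ t, y ∈ Set.Ioo (u i) (v i) := by
  by_contra hcon
  push_neg at hcon
  set Cov : F → Prop := fun z => ∃ t : Finset ι, ∀ y, a ≤ y → y ≤ z → ∃ i ∈ t, y ∈ Set.Ioo (u i) (v i)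
    with hCov
  set A : Set F := {x | x < a ∨ (x ≤ b ∧ Cov x)} with hA
  have hdown : ∀ x ∈ A, ∀ y : F, y ≤ x → y ∈ A := by
    rintro x (hx | ⟨hxb, t, ht⟩) y hyx
    · exact Or.inl (lt_of_le_of_lt hyx hx)
    · rcases lt_or_ge y a with h | h
      · exact Or.inl h
      · exact Or.inr ⟨hyx.trans hxb, t, fun z hz1 hz2 => ht z hz1 (hz2.trans hyx)⟩
  have haA : a ∈ A := by
    obtain ⟨i0, hi0⟩ := hcov a ⟨le_refl a, hab⟩
    exact Or.inr ⟨hab, {i0}, fun y hy1 hy2 => ⟨i0, Finset.mem_singleton_self _, by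
      have : y = a := le_antisymm hy2 hy1; rwa [this]⟩⟩
  have hbA : b ∉ A := by
    rintro (h | ⟨-, t, ht⟩)
    · exact absurd hab (not_le.mpr h)
    · obtain ⟨y, hy, hyall⟩ := hcon t
      obtain ⟨i, hi, hmem⟩ := ht y hy.1 hy.2
      exact hyall i hi hmem
  obtain ⟨c, hc⟩ := hCA A ⟨⟨a, haA⟩, fun h => hbA (h ▸ Set.mem_univ _),
    fun x hx y hy => by by_contra h; push_neg at h; exact hy (hdown x hx y h)⟩
  have hmemlt : ∀ x : F, x < c → x ∈ A := by
    intro x hx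
    by_contra hxA
    exact absurd (hc a haA x hxA).2 (not_le.mpr hx)
  have hnotmem : ∀ y : F, c < y → y ∉ A := fun y hy hyA =>
    absurd (hc y hyA b hbA).1 (not_le.mpr hy)
  have hac : a ≤ c := (hc a haA b hbA).1
  have hcb : c ≤ b := (hc a haA b hbA).2
  obtain ⟨i0, hi0⟩ := hcov c ⟨hac, hcb⟩
  -- get a point x₁ ≤ c, > u i0, with a finite cover of [a,x₁]
  obtain ⟨x₁, hx₁u, hx₁a, hx₁c, t₁, ht₁⟩ :
      ∃ x₁, u i0 < x₁ ∧ a ≤ x₁ ∧ x₁ ≤ c ∧ ∃ t₁ : Finset ι,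
        ∀ y, a ≤ y → y ≤ x₁ → ∃ i ∈ t₁, y ∈ Set.Ioo (u i) (v i) := by
    set m := (u i0 + c) / 2 with hm
    have hmc : m < c := by have := hi0.1; rw [hm]; linarith
    have hum : u i0 < m := by have := hi0.1; rw [hm]; linarith
    rcases le_or_gt a m with h | h
    · have hmA := hmemlt m hmc
      rcases hmA with h' | ⟨-, t₁, ht₁⟩
      · exact absurd h (not_le.mpr h')
      · exact ⟨m, hum, h, hmc.le, t₁, ht₁⟩
    · -- a > m: use x₁ = a
      refine ⟨a, ?_, le_refl a, hac, {i0}, fun y hy1 hy2 => ⟨i0, Finset.mem_singleton_self _, by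
        have : y = a := le_antisymm hy2 hy1
        subst this
        exact ⟨by linarith [hi0.1], lt_of_le_of_lt hac hi0.2⟩⟩⟩
      linarith [hi0.1]
  -- now extend past c
  have hkey : ∀ z, c ≤ z → z ≤ b → z < v i0 → z ∈ A := by
    intro z hz1 hz2 hz3
    refine Or.inr ⟨hz2, t₁ ∪ {i0}, fun y hy1 hy2 => ?_⟩
    rcases le_or_gt y x₁ with h | h
    · obtain ⟨i, hi, hmem⟩ := ht₁ y hy1 h
      exact ⟨i, Finset.mem_union_left _ hi, hmem⟩
    · exact ⟨i0, Finset.mem_union_right _ (Finset.mem_singleton_self _),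
        ⟨lt_trans hx₁u h, lt_of_le_of_lt hy2 hz3⟩⟩
  rcases eq_or_lt_of_le hcb with rfl | hlt
  · exact hbA (hkey c (le_refl c) (le_refl c) hi0.2)
  · set z := min ((c + v i0) / 2) b with hz
    have hzc : c < z := lt_min (by linarith [hi0.2]) hlt
    have hzb : z ≤ b := min_le_right _ _
    have hzv : z < v i0 := lt_of_le_of_lt (min_le_left _ _) (by linarith [hi0.2])
    exact hnotmem z hzc (hkey z hzc.le hzb hzv)

/-! ### Finset partitions and step integrals -/

/-- The next partition point after `t`. -/
noncomputable def nxt (P : Finset F) (t : F) : F :=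
  if h : (P.filter fun s => t < s).Nonempty then (P.filter fun s => t < s).min' h else t

/-- `P` is a partition set of `[a,b]`. -/
def Part (a b : F) (P : Finset F) : Prop :=
  a ∈ P ∧ b ∈ P ∧ ↑P ⊆ Set.Icc a b

/-- `φ` is constant on the open gaps of the partition `P` of `[a,b]`. -/
def Adapted (a b : F) (P : Finset F) (φ : F → F) : Prop :=
  Part a b P ∧ ∀ t ∈ P.erase b, ∀ x ∈ Set.Ioo t (nxt P t), ∀ y ∈ Set.Ioo t (nxt P t), φ x = φ y

/-- The step integral of `φ` with respect to the partition `P` of `[·,b]`. -/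
noncomputable def pInt (b : F) (P : Finset F) (φ : F → F) : F :=
  ∑ t ∈ P.erase b, φ ((t + nxt P t) / 2) * (nxt P t - t)

lemma nxt_eq {P : Finset F} {t s : F} (hs : s ∈ P) (hts : t < s)
    (hmin : ∀ r ∈ P, t < r → s ≤ r) : nxt P t = s := by
  have hne : (P.filter fun r => t < r).Nonempty := ⟨s, Finset.mem_filter.mpr ⟨hs, hts⟩⟩
  rw [nxt, dif_pos hne]
  refine le_antisymm (Finset.min'_le _ _ (Finset.mem_filter.mpr ⟨hs, hts⟩)) ?_
  refine Finset.le_min' _ _ _ fun r hr => ?_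
  obtain ⟨hr1, hr2⟩ := Finset.mem_filter.mp hr
  exact hmin r hr1 hr2

lemma nxt_spec₀ {P : Finset F} {t : F} (h : ∃ s ∈ P, t < s) :
    t < nxt P t ∧ nxt P t ∈ P ∧ ∀ r ∈ P, t < r → nxt P t ≤ r := by
  obtain ⟨s, hs, hts⟩ := h
  have hne : (P.filter fun r => t < r).Nonempty := ⟨s, Finset.mem_filter.mpr ⟨hs, hts⟩⟩
  rw [nxt, dif_pos hne]
  have hmem := Finset.min'_mem _ hne
  obtain ⟨h1, h2⟩ := Finset.mem_filter.mp hmem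
  exact ⟨h2, h1, fun r hr htr => Finset.min'_le _ _ (Finset.mem_filter.mpr ⟨hr, htr⟩)⟩

lemma nxt_ge (P : Finset F) (t : F) : t ≤ nxt P t := by
  rw [nxt]
  split
  · next h =>
    have := Finset.min'_mem _ h
    exact (Finset.mem_filter.mp this).2.le
  · exact le_refl t

-- facts about a Part
lemma Part.a_le_b {a b : F} {P : Finset F} (hP : Part a b P) : a ≤ b :=
  (hP.2.2 hP.1).2

lemma Part.mem_lt_b {a b : F} {P : Finset F} (hP : Part a b P) {t : F} (ht : t ∈ P.erase b) :
    t < b := by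
  obtain ⟨htb, htP⟩ := Finset.mem_erase.mp ht
  exact lt_of_le_of_ne (hP.2.2 htP).2 htb

lemma Part.nxt_spec {a b : F} {P : Finset F} (hP : Part a b P) {t : F} (ht : t ∈ P.erase b) :
    t < nxt P t ∧ nxt P t ∈ P ∧ nxt P t ≤ b ∧ ∀ r ∈ P, t < r → nxt P t ≤ r := by
  have h := nxt_spec₀ (P := P) (t := t) ⟨b, hP.2.1, hP.mem_lt_b ht⟩
  exact ⟨h.1, h.2.1, h.2.2 b hP.2.1 (hP.mem_lt_b ht), h.2.2⟩

lemma Part.nxt_gap {a b : F} {P : Finset F} (hP : Part a b P) {t : F} (ht : t ∈ P.erase b) :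
    ∀ s ∈ P, s ∉ Set.Ioo t (nxt P t) := by
  intro s hs ⟨h1, h2⟩
  exact absurd ((hP.nxt_spec ht).2.2.2 s hs h1) (not_le.mpr h2)

/-- Every point of `[a,b]` not in `P` lies in a gap. -/
lemma Part.gap {a b : F} {P : Finset F} (hP : Part a b P) {x : F}
    (hx : x ∈ Set.Icc a b) (hxP : x ∉ P) :
    ∃ t ∈ P.erase b, x ∈ Set.Ioo t (nxt P t) := by
  have hax : a < x := lt_of_le_of_ne hx.1 (fun h => hxP (h ▸ hP.1))
  set Q := P.filter (fun s => s < x) with hQ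
  have hQne : Q.Nonempty := ⟨a, Finset.mem_filter.mpr ⟨hP.1, hax⟩⟩
  set t := Q.max' hQne with htdef
  have htQ := Finset.max'_mem _ hQne
  obtain ⟨htP, htx⟩ := Finset.mem_filter.mp htQ
  have htb : t ≠ b := fun h => absurd hx.2 (not_le.mpr (h ▸ htx))
  have hterase : t ∈ P.erase b := Finset.mem_erase.mpr ⟨htb, htP⟩
  refine ⟨t, hterase, htx, ?_⟩
  by_contra h
  push_neg at h
  have hnxtx : nxt P t < x := lt_of_le_of_ne h (fun he => hxP (he ▸ (hP.nxt_spec hterase).2.1))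
  have : nxt P t ≤ t := Finset.le_max' Q (nxt P t) (Finset.mem_filter.mpr ⟨(hP.nxt_spec hterase).2.1, hnxtx⟩)
  exact absurd this (not_le.mpr (hP.nxt_spec hterase).1)

/-- Gaps are disjoint. -/
lemma Part.gap_unique {a b : F} {P : Finset F} (hP : Part a b P) {t t' x : F}
    (ht : t ∈ P.erase b) (ht' : t' ∈ P.erase b)
    (hx : x ∈ Set.Ioo t (nxt P t)) (hx' : x ∈ Set.Ioo t' (nxt P t')) : t = t' := by
  rcases lt_trichotomy t t' with h | h | h
  · exact absurd (hP.nxt_gap ht t' (Finset.mem_erase.mp ht').2 ⟨h, lt_trans hx'.1 hx.2⟩) (by simp)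
  · exact h
  · exact absurd (hP.nxt_gap ht' t (Finset.mem_erase.mp ht).2 ⟨h, lt_trans hx.1 hx'.2⟩) (by simp)

/-- The dichotomy: a gap is either inside `(c,d)` (for `c, d ∈ P`) or disjoint from it. -/
lemma Part.gap_dich {a b : F} {P : Finset F} (hP : Part a b P) {t c d x : F}
    (ht : t ∈ P.erase b) (hc : c ∈ P) (hd : d ∈ P)
    (hx : x ∈ Set.Ioo t (nxt P t)) (hx' : x ∈ Set.Ioo c d) :
    c ≤ t ∧ nxt P t ≤ d := by
  constructor
  · by_contra h
    push_neg at h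
    have := hP.nxt_gap ht c hc ⟨h, lt_trans hx'.1 hx.2⟩
    simp at this
  · by_contra h
    push_neg at h
    have := hP.nxt_gap ht d hd ⟨lt_trans hx.1 hx'.2, h⟩
    simp at this

/-! ### Refinement invariance of the step integral -/

lemma insert_step {a b : F} {P : Finset F} {φ : F → F} (hP : Adapted a b P φ) {t0 : F}
    (ht0P : t0 ∉ P) (ht0 : t0 ∈ Set.Ioo a b) :
    Adapted a b (insert t0 P) φ ∧ pInt b (insert t0 P) φ = pInt b P φ := by
  obtain ⟨hPart, hconst⟩ := hP
  obtain ⟨p, hp, hpgap⟩ := hPart.gap ⟨ht0.1.le, ht0.2.le⟩ ht0P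
  have hpspec := hPart.nxt_spec hp
  set q := nxt P p with hq
  have hpP : p ∈ P := (Finset.mem_erase.mp hp).2
  -- new partition facts
  have hPart' : Part a b (insert t0 P) := by
    refine ⟨Finset.mem_insert_of_mem hPart.1, Finset.mem_insert_of_mem hPart.2.1, ?_⟩
    intro x hx
    rcases Finset.mem_insert.mp (Finset.mem_coe.mp hx) with h | h
    · exact ⟨h ▸ ht0.1.le, h ▸ ht0.2.le⟩
    · exact hPart.2.2 h
  -- nxt computations
  have hnxt_p : nxt (insert t0 P) p = t0 := by
    refine nxt_eq (Finset.mem_insert_self _ _) hpgap.1 ?_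
    intro r hr hpr
    rcases Finset.mem_insert.mp hr with h | h
    · exact h ▸ le_refl _
    · by_contra hcon
      push_neg at hcon
      exact hPart.nxt_gap hp r h ⟨hpr, lt_trans hcon hpgap.2⟩
  have hnxt_t0 : nxt (insert t0 P) t0 = q := by
    refine nxt_eq (Finset.mem_insert_of_mem hpspec.2.1) hpgap.2 ?_
    intro r hr ht0r
    rcases Finset.mem_insert.mp hr with h | h
    · exact absurd (h ▸ ht0r) (lt_irrefl _)
    · by_contra hcon
      push_neg at hcon
      exact hPart.nxt_gap hp r h ⟨lt_trans hpgap.1 ht0r, hcon⟩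
  have hnxt_other : ∀ t ∈ P.erase b, t ≠ p → nxt (insert t0 P) t = nxt P t := by
    intro t ht htp
    have hts := hPart.nxt_spec ht
    refine nxt_eq (Finset.mem_insert_of_mem hts.2.1) hts.1 ?_
    intro r hr htr
    rcases Finset.mem_insert.mp hr with h | h
    · -- r = t0 : show nxt P t ≤ t0
      subst h
      by_contra hcon
      push_neg at hcon
      exact htp (hPart.gap_unique ht hp ⟨htr, hcon⟩ hpgap)
    · exact hts.2.2.2 r h htr
  -- gaps of insert are within gaps of P
  have ht0b : t0 ≠ b := ne_of_lt ht0.2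
  have ht0q : t0 < q := hpgap.2
  have hconst' : ∀ t ∈ (insert t0 P).erase b, ∀ x ∈ Set.Ioo t (nxt (insert t0 P) t),
      ∀ y ∈ Set.Ioo t (nxt (insert t0 P) t), φ x = φ y := by
    intro t ht x hx y hy
    obtain ⟨htb, htmem⟩ := Finset.mem_erase.mp ht
    rcases Finset.mem_insert.mp htmem with h | h
    · subst h
      rw [hnxt_t0] at hx hy
      exact hconst p hp x ⟨lt_trans hpgap.1 hx.1, hx.2⟩ y ⟨lt_trans hpgap.1 hy.1, hy.2⟩
    · have ht' : t ∈ P.erase b := Finset.mem_erase.mpr ⟨htb, h⟩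
      by_cases htp : t = p
      · subst htp
        rw [hnxt_p] at hx hy
        exact hconst t ht' x ⟨hx.1, lt_trans hx.2 hpgap.2⟩ y ⟨hy.1, lt_trans hy.2 hpgap.2⟩
      · rw [hnxt_other t ht' htp] at hx hy
        exact hconst t ht' x hx y hy
  refine ⟨⟨hPart', hconst'⟩, ?_⟩
  -- integral computation
  have herase : (insert t0 P).erase b = insert t0 (P.erase b) := Finset.erase_insert_of_ne ht0b
  have ht0notin : t0 ∉ P.erase b := fun h => ht0P (Finset.mem_erase.mp h).2
  have hpb : p ∈ P.erase b := hp
  set g' : F → F := fun t => φ ((t + nxt (insert t0 P) t) / 2) * (nxt (insert t0 P) t - t)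
    with hg'
  set g : F → F := fun t => φ ((t + nxt P t) / 2) * (nxt P t - t) with hg
  have hsum' : pInt b (insert t0 P) φ = g' t0 + ∑ t ∈ P.erase b, g' t := by
    rw [pInt, herase, Finset.sum_insert ht0notin]
  have hsum'2 : ∑ t ∈ P.erase b, g' t = g' p + ∑ t ∈ (P.erase b).erase p, g' t :=
    (Finset.add_sum_erase _ _ hpb).symm
  have hsum2 : pInt b P φ = g p + ∑ t ∈ (P.erase b).erase p, g t :=
    (Finset.add_sum_erase _ _ hpb).symm
  have hgg : ∀ t ∈ (P.erase b).erase p, g' t = g t := by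
    intro t ht
    obtain ⟨htp, ht'⟩ := Finset.mem_erase.mp ht
    rw [hg', hg]
    simp only [hnxt_other t ht' htp]
  -- the key three-term identity
  have hval : g' t0 + g' p = g p := by
    rw [hg', hg]
    simp only [hnxt_t0, hnxt_p]
    have hm1 : (t0 + q) / 2 ∈ Set.Ioo p q :=
      ⟨lt_trans hpgap.1 (by simp only [Set.mem_Ioo] at *; linarith), by
        simp only [Set.mem_Ioo] at *; linarith⟩
    have hm2 : (p + t0) / 2 ∈ Set.Ioo p q :=
      ⟨by simp only [Set.mem_Ioo] at *; linarith, lt_trans (by simp only [Set.mem_Ioo] at *; linarith) hpgap.2⟩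
    have hm3 : (p + q) / 2 ∈ Set.Ioo p q :=
      ⟨by simp only [Set.mem_Ioo] at *; linarith [hpspec.1], by simp only [Set.mem_Ioo] at *; linarith [hpspec.1]⟩
    rw [hconst p hp _ hm1 _ hm3, hconst p hp _ hm2 _ hm3]
    ring
  rw [hsum', hsum'2, Finset.sum_congr rfl hgg, hsum2, ← add_assoc, hval]

/-- Refinement invariance. -/
lemma refine_step {a b : F} {P Q : Finset F} {φ : F → F} (hP : Adapted a b P φ)
    (hPQ : P ⊆ Q) (hQ : Part a b Q) :
    Adapted a b Q φ ∧ pInt b Q φ = pInt b P φ := by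
  generalize hn : (Q \ P).card = n
  induction n generalizing P with
  | zero =>
    have : Q \ P = ∅ := Finset.card_eq_zero.mp hn
    have hQP : Q ⊆ P := fun x hx => by
      by_contra h
      exact absurd (this ▸ Finset.mem_sdiff.mpr ⟨hx, h⟩) (Finset.notMem_empty x)
    have : P = Q := Finset.Subset.antisymm hPQ hQP
    subst this
    exact ⟨hP, rfl⟩
  | succ k ih =>
    have hne : (Q \ P).Nonempty := Finset.card_pos.mp (hn ▸ Nat.succ_pos k)
    obtain ⟨t0, ht0⟩ := hne
    obtain ⟨ht0Q, ht0P⟩ := Finset.mem_sdiff.mp ht0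
    have ht0ab : t0 ∈ Set.Ioo a b := by
      have h1 := hQ.2.2 ht0Q
      refine ⟨lt_of_le_of_ne h1.1 (fun h => ht0P (h ▸ hP.1.1)), lt_of_le_of_ne h1.2 ?_⟩
      exact fun h => ht0P (h ▸ hP.1.2.1)
    obtain ⟨had, heq⟩ := insert_step hP ht0P ht0ab
    have hsub : insert t0 P ⊆ Q := Finset.insert_subset ht0Q hPQ
    have hcard : (Q \ insert t0 P).card = k := by
      have : Q \ insert t0 P = (Q \ P).erase t0 := by
        ext x
        simp only [Finset.mem_sdiff, Finset.mem_erase, Finset.mem_insert, not_or]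
        tauto
      rw [this, Finset.card_erase_of_mem ht0, hn]
      rfl
    obtain ⟨had2, heq2⟩ := ih had hsub hcard
    exact ⟨had2, heq2.trans heq⟩

/-- Pointwise comparison of step integrals, off a finite exceptional set. -/
lemma pInt_mono {a b : F} {P Q : Finset F} {φ ψ : F → F} (hφ : Adapted a b P φ)
    (hψ : Adapted a b Q ψ) (E : Finset F)
    (hle : ∀ x ∈ Set.Ioo a b, x ∉ E → φ x ≤ ψ x) :
    pInt b P φ ≤ pInt b Q ψ := by
  set R := P ∪ Q ∪ E.filter (fun x => x ∈ Set.Icc a b) with hR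
  have hPR : P ⊆ R := fun x hx => Finset.mem_union_left _ (Finset.mem_union_left _ hx)
  have hQR : Q ⊆ R := fun x hx => Finset.mem_union_left _ (Finset.mem_union_right _ hx)
  have hRpart : Part a b R := by
    refine ⟨hPR hφ.1.1, hPR hφ.1.2.1, ?_⟩
    intro x hx
    rcases Finset.mem_union.mp (Finset.mem_coe.mp hx) with h | h
    · rcases Finset.mem_union.mp h with h' | h'
      · exact hφ.1.2.2 h'
      · exact hψ.1.2.2 h'
    · exact (Finset.mem_filter.mp h).2
  obtain ⟨hadφ, heqφ⟩ := refine_step hφ hPR hRpart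
  obtain ⟨hadψ, heqψ⟩ := refine_step hψ hQR hRpart
  rw [← heqφ, ← heqψ]
  rw [pInt, pInt]
  refine Finset.sum_le_sum fun t ht => ?_
  have hts := hRpart.nxt_spec ht
  have hmid : (t + nxt R t) / 2 ∈ Set.Ioo t (nxt R t) := ⟨by linarith [hts.1], by linarith [hts.1]⟩
  have hmidab : (t + nxt R t) / 2 ∈ Set.Ioo a b := by
    have h1 := (hRpart.2.2 (Finset.mem_erase.mp ht).2).1
    have h2 := hts.2.2.1
    exact ⟨lt_of_le_of_lt h1 hmid.1, lt_of_lt_of_le hmid.2 h2⟩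
  have hmidE : (t + nxt R t) / 2 ∉ E := by
    intro h
    have : (t + nxt R t) / 2 ∈ R := Finset.mem_union_right _
      (Finset.mem_filter.mpr ⟨h, ⟨hmidab.1.le, hmidab.2.le⟩⟩)
    exact hRpart.nxt_gap ht _ this hmid
  exact mul_le_mul_of_nonneg_right (hle _ hmidab hmidE) (by linarith [hts.1])

/-- Uniqueness of the step integral. -/
lemma pInt_unique {a b : F} {P Q : Finset F} {φ : F → F} (hP : Adapted a b P φ)
    (hQ : Adapted a b Q φ) : pInt b P φ = pInt b Q φ :=
  le_antisymm (pInt_mono hP hQ ∅ fun x _ _ => le_refl _)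
    (pInt_mono hQ hP ∅ fun x _ _ => le_refl _)

lemma pInt_add {b : F} {P : Finset F} (φ ψ : F → F) :
    pInt b P (fun x => φ x + ψ x) = pInt b P φ + pInt b P ψ := by
  rw [pInt, pInt, pInt, ← Finset.sum_add_distrib]
  exact Finset.sum_congr rfl fun t _ => by ring

lemma adapted_const {a b r : F} (hab : a ≤ b) : Adapted a b {a, b} (fun _ => r) :=
  ⟨⟨Finset.mem_insert_self _ _, Finset.mem_insert_of_mem (Finset.mem_singleton_self _),
    by intro x hx
       rcases Finset.mem_insert.mp (Finset.mem_coe.mp hx) with rfl | h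
       · exact ⟨le_refl _, hab⟩
       · rw [Finset.mem_singleton] at h
         subst h
         exact ⟨hab, le_refl _⟩⟩,
   fun _ _ _ _ _ _ => rfl⟩

lemma adapted_zero {a b : F} (hab : a ≤ b) : Adapted a b {a, b} (fun _ => (0:F)) :=
  adapted_const hab

lemma pInt_pair {a b : F} (hab : a ≤ b) (φ : F → F) :
    pInt b ({a, b} : Finset F) φ = φ ((a + b)/2) * (b - a) := by
  rcases eq_or_lt_of_le hab with rfl | hlt
  · have : ({a, a} : Finset F).erase a = ∅ := by
      simp
    rw [pInt, this, Finset.sum_empty]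
    ring
  · have herase : ({a, b} : Finset F).erase b = {a} := by
      rw [Finset.erase_insert_of_ne (ne_of_lt hlt)]
      simp
    have hnxt : nxt ({a, b} : Finset F) a = b := by
      refine nxt_eq (Finset.mem_insert_of_mem (Finset.mem_singleton_self _)) hlt ?_
      intro r hr har
      rcases Finset.mem_insert.mp hr with h | h
      · exact absurd (h ▸ har) (lt_irrefl _)
      · rw [Finset.mem_singleton] at h
        exact h ▸ le_refl _
    rw [pInt, herase, Finset.sum_singleton, hnxt]

/-! ### Telescoping and the covering estimate -/

lemma tel_basic {a b : F} {P : Finset F} (hP : Part a b P) :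
    ∑ t ∈ P.erase b, (nxt P t - t) = b - a := by
  have h1 : Adapted a b P (fun _ => (1:F)) := ⟨hP, fun _ _ _ _ _ _ => rfl⟩
  have h2 : pInt b P (fun _ => (1:F)) = ∑ t ∈ P.erase b, (nxt P t - t) := by
    rw [pInt]; exact Finset.sum_congr rfl fun t _ => one_mul _
  rw [← h2, pInt_unique h1 (adapted_const hP.a_le_b), pInt_pair hP.a_le_b]
  ring

lemma tel_general {a b c d : F} {R : Finset F} (hR : Part a b R) (hc : c ∈ R) (hd : d ∈ R)
    (hcd : c ≤ d) :
    ∑ t ∈ (R.erase b).filter (fun t => c ≤ t ∧ nxt R t ≤ d), (nxt R t - t) = d - c := by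
  set R' := R.filter (fun x => x ∈ Set.Icc c d) with hR'def
  have hcR' : c ∈ R' := Finset.mem_filter.mpr ⟨hc, le_refl _, hcd⟩
  have hdR' : d ∈ R' := Finset.mem_filter.mpr ⟨hd, hcd, le_refl _⟩
  have hR'part : Part c d R' := ⟨hcR', hdR', fun x hx => (Finset.mem_filter.mp (Finset.mem_coe.mp hx)).2⟩
  have hdb : d ≤ b := (hR.2.2 hd).2
  have hagree : ∀ t ∈ R'.erase d, nxt R' t = nxt R t := by
    intro t ht
    obtain ⟨htd, htR'⟩ := Finset.mem_erase.mp ht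
    obtain ⟨htR, htc, htd'⟩ := Finset.mem_filter.mp htR'
    have htlt : t < d := lt_of_le_of_ne htd' htd
    have htb : t ∈ R.erase b := Finset.mem_erase.mpr ⟨ne_of_lt (lt_of_lt_of_le htlt hdb), htR⟩
    have hspec := hR.nxt_spec htb
    have hnd : nxt R t ≤ d := hspec.2.2.2 d hd htlt
    refine nxt_eq (Finset.mem_filter.mpr ⟨hspec.2.1, le_trans htc hspec.1.le, hnd⟩) hspec.1 ?_
    intro r hr htr
    exact hspec.2.2.2 r (Finset.mem_filter.mp hr).1 htr
  have hsets : (R.erase b).filter (fun t => c ≤ t ∧ nxt R t ≤ d) = R'.erase d := by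
    ext t
    simp only [Finset.mem_filter, Finset.mem_erase, hR'def, Set.mem_Icc]
    constructor
    · rintro ⟨⟨htb, htR⟩, htc, hnd⟩
      have hspec := hR.nxt_spec (Finset.mem_erase.mpr ⟨htb, htR⟩)
      exact ⟨ne_of_lt (lt_of_lt_of_le hspec.1 hnd), htR, htc, le_trans hspec.1.le hnd⟩
    · rintro ⟨htd, htR, htc, htd'⟩
      have htlt : t < d := lt_of_le_of_ne htd' htd
      have htb : t ≠ b := ne_of_lt (lt_of_lt_of_le htlt hdb)
      have hspec := hR.nxt_spec (Finset.mem_erase.mpr ⟨htb, htR⟩)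
      exact ⟨⟨htb, htR⟩, htc, hspec.2.2.2 d hd htlt⟩
  rw [hsets]
  rw [Finset.sum_congr rfl (fun t ht => by rw [← hagree t ht])]
  exact tel_basic hR'part

lemma adapted_bound {a b : F} {P : Finset F} {φ : F → F} (hP : Adapted a b P φ) :
    ∃ B : F, ∀ x ∈ Set.Icc a b, φ x ≤ B := by
  set S := P.image φ ∪ (P.erase b).image (fun t => φ ((t + nxt P t) / 2)) with hS
  have hne : S.Nonempty := ⟨φ a, Finset.mem_union_left _ (Finset.mem_image_of_mem _ hP.1.1)⟩
  refine ⟨S.max' hne, fun x hx => ?_⟩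
  by_cases hxP : x ∈ P
  · exact Finset.le_max' _ _ (Finset.mem_union_left _ (Finset.mem_image_of_mem _ hxP))
  · obtain ⟨t, ht, hgap⟩ := hP.1.gap hx hxP
    have hspec := hP.1.nxt_spec ht
    have hmid : (t + nxt P t) / 2 ∈ Set.Ioo t (nxt P t) := ⟨by linarith [hspec.1], by linarith [hspec.1]⟩
    have hx2 : φ x = φ ((t + nxt P t) / 2) := hP.2 t ht x hgap ((t + nxt P t) / 2) hmid
    rw [hx2]
    exact Finset.le_max' S _ (Finset.mem_union_right _
      (Finset.mem_image_of_mem (fun t => φ ((t + nxt P t) / 2)) ht))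

lemma sum_biUnion_le {ι α : Type*} [DecidableEq α] (s : Finset ι) (U : ι → Finset α)
    (f : α → F) (hf : ∀ x, 0 ≤ f x) :
    ∑ x ∈ s.biUnion U, f x ≤ ∑ k ∈ s, ∑ x ∈ U k, f x := by
  classical
  induction s using Finset.induction with
  | empty => simp
  | @insert a s ha ih =>
    rw [Finset.biUnion_insert, Finset.sum_insert ha]
    have h1 : ∑ x ∈ U a ∪ s.biUnion U, f x + ∑ x ∈ U a ∩ s.biUnion U, f x
        = ∑ x ∈ U a, f x + ∑ x ∈ s.biUnion U, f x := Finset.sum_union_inter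
    have h2 : (0:F) ≤ ∑ x ∈ U a ∩ s.biUnion U, f x := Finset.sum_nonneg fun x _ => hf x
    linarith [ih]

/-- The covering estimate for step integrals. -/
lemma pInt_le_cover {a b : F} {P : Finset F} {φ : F → F} (hP : Adapted a b P φ)
    {ι : Type*} (s : Finset ι) (u v : ι → F) (hcd : ∀ k ∈ s, u k ≤ v k)
    {B ε₀ : F} (hB0 : 0 ≤ B) (hε0 : 0 ≤ ε₀)
    (hB : ∀ x ∈ Set.Ioo a b, φ x ≤ B)
    (hsmall : ∀ x ∈ Set.Ioo a b, (∀ k ∈ s, x ∉ Set.Ioo (u k) (v k)) → φ x ≤ ε₀) :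
    pInt b P φ ≤ ε₀ * (b - a) + B * ∑ k ∈ s, (v k - u k) := by
  set u' : ι → F := fun k => min (max (u k) a) b with hu'
  set v' : ι → F := fun k => max (min (v k) b) (u' k) with hv'
  have hu'mem : ∀ k, u' k ∈ Set.Icc a b := fun k =>
    ⟨le_min (le_max_right _ _) hP.1.a_le_b, min_le_right _ _⟩
  have hv'mem : ∀ k, v' k ∈ Set.Icc a b := fun k =>
    ⟨le_trans (hu'mem k).1 (le_max_right _ _), max_le (le_trans (min_le_right _ _) (le_refl b)) (hu'mem k).2⟩
  have hu'v' : ∀ k, u' k ≤ v' k := fun k => le_max_right _ _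
  have hlen : ∀ k ∈ s, v' k - u' k ≤ v k - u k := by
    intro k hk
    rcases le_or_gt (min (v k) b) (u' k) with h | h
    · have : v' k = u' k := by rw [hv']; exact max_eq_right h
      rw [this]; linarith [hcd k hk]
    · have hveq : v' k = min (v k) b := by rw [hv']; exact max_eq_left h.le
      rcases le_or_gt b (max (u k) a) with h2 | h2
      · have : u' k = b := by rw [hu']; exact min_eq_right h2
        rw [hveq, this]
        have := min_le_right (v k) b
        linarith [hcd k hk]
      · have : u' k = max (u k) a := by rw [hu']; exact min_eq_left h2.le
        rw [hveq, this]
        have h3 := min_le_left (v k) b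
        have h4 := le_max_left (u k) a
        linarith
  have hcapture : ∀ k, ∀ x ∈ Set.Ioo a b, x ∈ Set.Ioo (u k) (v k) → x ∈ Set.Ioo (u' k) (v' k) := by
    intro k x hxab hxk
    constructor
    · exact lt_of_le_of_lt (min_le_left _ _) (max_lt hxk.1 hxab.1)
    · exact lt_of_lt_of_le (lt_min hxk.2 hxab.2) (le_max_left _ _)
  set R := P ∪ s.image u' ∪ s.image v' with hR
  have hPR : P ⊆ R := fun x hx => Finset.mem_union_left _ (Finset.mem_union_left _ hx)
  have hRpart : Part a b R := by
    refine ⟨hPR hP.1.1, hPR hP.1.2.1, ?_⟩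
    intro x hx
    rcases Finset.mem_union.mp (Finset.mem_coe.mp hx) with h | h
    · rcases Finset.mem_union.mp h with h' | h'
      · exact hP.1.2.2 h'
      · obtain ⟨k, _, rfl⟩ := Finset.mem_image.mp h'
        exact hu'mem k
    · obtain ⟨k, _, rfl⟩ := Finset.mem_image.mp h
      exact hv'mem k
  obtain ⟨hadR, heqR⟩ := refine_step hP hPR hRpart
  rw [← heqR, pInt]
  set mid : F → F := fun t => (t + nxt R t) / 2 with hmid
  have hmidgap : ∀ t ∈ R.erase b, mid t ∈ Set.Ioo t (nxt R t) := by
    intro t ht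
    have hspec := hRpart.nxt_spec ht
    exact ⟨by rw [hmid]; simp only; linarith [hspec.1], by rw [hmid]; simp only; linarith [hspec.1]⟩
  have hmidab : ∀ t ∈ R.erase b, mid t ∈ Set.Ioo a b := by
    intro t ht
    have h1 := (hRpart.2.2 (Finset.mem_erase.mp ht).2).1
    exact ⟨lt_of_le_of_lt h1 (hmidgap t ht).1, lt_of_lt_of_le (hmidgap t ht).2 (hRpart.nxt_spec ht).2.2.1⟩
  have hlennn : ∀ t ∈ R.erase b, (0:F) ≤ nxt R t - t := fun t ht => by linarith [(hRpart.nxt_spec ht).1]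
  set T₁ := (R.erase b).filter (fun t => ∃ k ∈ s, mid t ∈ Set.Ioo (u' k) (v' k)) with hT₁
  set T₂ := (R.erase b).filter (fun t => ¬ ∃ k ∈ s, mid t ∈ Set.Ioo (u' k) (v' k)) with hT₂
  have hsplit : ∑ t ∈ R.erase b, φ (mid t) * (nxt R t - t)
      = ∑ t ∈ T₁, φ (mid t) * (nxt R t - t) + ∑ t ∈ T₂, φ (mid t) * (nxt R t - t) :=
    (Finset.sum_filter_add_sum_filter_not (R.erase b) _ _).symm
  have hbound2 : ∑ t ∈ T₂, φ (mid t) * (nxt R t - t) ≤ ε₀ * (b - a) := by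
    have h1 : ∑ t ∈ T₂, φ (mid t) * (nxt R t - t) ≤ ∑ t ∈ T₂, ε₀ * (nxt R t - t) := by
      refine Finset.sum_le_sum fun t ht => ?_
      have htT : t ∈ R.erase b := (Finset.mem_filter.mp ht).1
      have hnot := (Finset.mem_filter.mp ht).2
      refine mul_le_mul_of_nonneg_right ?_ (hlennn t htT)
      refine hsmall _ (hmidab t htT) fun k hk hmem => ?_
      exact hnot ⟨k, hk, hcapture k _ (hmidab t htT) hmem⟩
    have h2 : ∑ t ∈ T₂, ε₀ * (nxt R t - t) ≤ ∑ t ∈ R.erase b, ε₀ * (nxt R t - t) := by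
      refine Finset.sum_le_sum_of_subset_of_nonneg (Finset.filter_subset _ _) fun t ht _ =>
        mul_nonneg hε0 (hlennn t ht)
    have h3 : ∑ t ∈ R.erase b, ε₀ * (nxt R t - t) = ε₀ * (b - a) := by
      rw [← Finset.mul_sum, tel_basic hRpart]
    linarith
  have hbound1 : ∑ t ∈ T₁, φ (mid t) * (nxt R t - t) ≤ B * ∑ k ∈ s, (v' k - u' k) := by
    have h1 : ∑ t ∈ T₁, φ (mid t) * (nxt R t - t) ≤ ∑ t ∈ T₁, B * (nxt R t - t) := by
      refine Finset.sum_le_sum fun t ht => ?_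
      have htT : t ∈ R.erase b := (Finset.mem_filter.mp ht).1
      exact mul_le_mul_of_nonneg_right (hB _ (hmidab t htT)) (hlennn t htT)
    set U : ι → Finset F := fun k => (R.erase b).filter (fun t => u' k ≤ t ∧ nxt R t ≤ v' k) with hU
    have hsub : T₁ ⊆ s.biUnion U := by
      intro t ht
      obtain ⟨htT, k, hk, hmem⟩ := Finset.mem_filter.mp ht
      refine Finset.mem_biUnion.mpr ⟨k, hk, Finset.mem_filter.mpr ⟨htT, ?_⟩⟩
      have hu'R : u' k ∈ R := Finset.mem_union_left _ (Finset.mem_union_right _ (Finset.mem_image_of_mem _ hk))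
      have hv'R : v' k ∈ R := Finset.mem_union_right _ (Finset.mem_image_of_mem _ hk)
      exact hRpart.gap_dich htT hu'R hv'R (hmidgap t htT) hmem
    have h2 : ∑ t ∈ T₁, (nxt R t - t) ≤ ∑ k ∈ s, ∑ t ∈ U k, (nxt R t - t) := by
      refine le_trans (Finset.sum_le_sum_of_subset_of_nonneg hsub ?_) ?_
      · intro t ht _
        rcases Finset.mem_biUnion.mp ht with ⟨k, _, htk⟩
        exact hlennn t (Finset.mem_filter.mp htk).1
      · exact sum_biUnion_le s U _ (fun x => by linarith [nxt_ge R x])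
    have h3 : ∀ k ∈ s, ∑ t ∈ U k, (nxt R t - t) = v' k - u' k := by
      intro k hk
      have hu'R : u' k ∈ R := Finset.mem_union_left _ (Finset.mem_union_right _ (Finset.mem_image_of_mem _ hk))
      have hv'R : v' k ∈ R := Finset.mem_union_right _ (Finset.mem_image_of_mem _ hk)
      exact tel_general hRpart hu'R hv'R (hu'v' k)
    calc ∑ t ∈ T₁, φ (mid t) * (nxt R t - t) ≤ ∑ t ∈ T₁, B * (nxt R t - t) := h1
      _ = B * ∑ t ∈ T₁, (nxt R t - t) := by rw [Finset.mul_sum]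
      _ ≤ B * ∑ k ∈ s, ∑ t ∈ U k, (nxt R t - t) := mul_le_mul_of_nonneg_left h2 hB0
      _ = B * ∑ k ∈ s, (v' k - u' k) := by rw [Finset.sum_congr rfl h3]
  have hfinal : B * ∑ k ∈ s, (v' k - u' k) ≤ B * ∑ k ∈ s, (v k - u k) :=
    mul_le_mul_of_nonneg_left (Finset.sum_le_sum hlen) hB0
  linarith [hsplit, hbound1, hbound2, hfinal]

/-! ### Conversions from the `ℕ`-indexed partition format -/

lemma xmono {x : ℕ → F} {n : ℕ} (hx : ∀ i < n, x i < x (i + 1)) :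
    ∀ i j, i < j → j ≤ n → x i < x j := by
  intro i j hij hjn
  induction j with
  | zero => omega
  | succ k ih =>
    rcases Nat.lt_or_ge i k with h | h
    · exact lt_trans (ih h (by omega)) (hx k (by omega))
    · have : i = k := by omega
      subst this
      exact hx i (by omega)

lemma xmono_le {x : ℕ → F} {n : ℕ} (hx : ∀ i < n, x i < x (i + 1)) :
    ∀ i j, i ≤ j → j ≤ n → x i ≤ x j := by
  intro i j hij hjn
  rcases eq_or_lt_of_le hij with rfl | h
  · exact le_refl _
  · exact (xmono hx i j h hjn).le

lemma conv_partition {a b : F} {φ : F → F} {n : ℕ} {x : ℕ → F}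
    (h0 : x 0 = a) (hn : x n = b) (hx : ∀ i < n, x i < x (i + 1))
    (hc : ∀ i < n, ∀ s ∈ Set.Ioo (x i) (x (i + 1)), ∀ s' ∈ Set.Ioo (x i) (x (i + 1)), φ s = φ s') :
    ∃ P : Finset F, Adapted a b P φ ∧
      pInt b P φ = ∑ i ∈ Finset.range n, φ ((x i + x (i + 1)) / 2) * (x (i + 1) - x i) := by
  set P := (Finset.range (n + 1)).image x with hP
  have hmem : ∀ i, i ≤ n → x i ∈ P := fun i hi =>
    Finset.mem_image_of_mem x (Finset.mem_range.mpr (by omega))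
  have haP : a ∈ P := h0 ▸ hmem 0 (by omega)
  have hbP : b ∈ P := hn ▸ hmem n (le_refl _)
  have hPart : Part a b P := by
    refine ⟨haP, hbP, ?_⟩
    intro y hy
    obtain ⟨i, hi, rfl⟩ := Finset.mem_image.mp (Finset.mem_coe.mp hy)
    rw [Finset.mem_range] at hi
    exact ⟨h0 ▸ xmono_le hx 0 i (by omega) (by omega), hn ▸ xmono_le hx i n (by omega) (le_refl _)⟩
  have hnxt : ∀ i < n, nxt P (x i) = x (i + 1) := by
    intro i hi
    refine nxt_eq (hmem (i+1) (by omega)) (hx i hi) ?_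
    intro r hr hir
    obtain ⟨j, hj, rfl⟩ := Finset.mem_image.mp hr
    rw [Finset.mem_range] at hj
    have hij : i < j := by
      by_contra h
      push_neg at h
      exact absurd (xmono_le hx j i h (by omega)) (not_le.mpr hir)
    exact xmono_le hx (i+1) j (by omega) (by omega)
  have herase : P.erase b = (Finset.range n).image x := by
    ext y
    constructor
    · intro hy
      obtain ⟨hyb, hyP⟩ := Finset.mem_erase.mp hy
      obtain ⟨i, hi, rfl⟩ := Finset.mem_image.mp hyP
      rw [Finset.mem_range] at hi
      refine Finset.mem_image.mpr ⟨i, Finset.mem_range.mpr ?_, rfl⟩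
      rcases Nat.lt_or_ge i n with h | h
      · exact h
      · have hin : i = n := by omega
        subst hin
        exact absurd hn hyb
    · intro hy
      obtain ⟨i, hi, rfl⟩ := Finset.mem_image.mp hy
      rw [Finset.mem_range] at hi
      refine Finset.mem_erase.mpr ⟨?_, hmem i (by omega)⟩
      intro h
      exact absurd (hn ▸ h : x i = x n) (ne_of_lt (xmono hx i n hi (le_refl _)))
  have hinj : ∀ i ∈ Finset.range n, ∀ j ∈ Finset.range n, x i = x j → i = j := by
    intro i hi j hj hij
    rw [Finset.mem_range] at hi hj
    by_contra h
    rcases Nat.lt_or_ge i j with h' | h'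
    · exact absurd hij (ne_of_lt (xmono hx i j h' (by omega)))
    · exact absurd hij.symm (ne_of_lt (xmono hx j i (by omega) (by omega)))
  refine ⟨P, ⟨hPart, ?_⟩, ?_⟩
  · intro t ht s hs s' hs'
    rw [herase] at ht
    obtain ⟨i, hi, rfl⟩ := Finset.mem_image.mp ht
    rw [Finset.mem_range] at hi
    rw [hnxt i hi] at hs hs'
    exact hc i hi s hs s' hs'
  · rw [pInt, herase, Finset.sum_image hinj]
    refine Finset.sum_congr rfl fun i hi => ?_
    rw [Finset.mem_range] at hi
    rw [hnxt i hi]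

lemma isStepOn_adapted {a b : F} {φ : F → F} (h : IsStepOn a b φ) :
    ∃ P : Finset F, Adapted a b P φ := by
  obtain ⟨n, x, h0, hn, hx, hc⟩ := h
  obtain ⟨P, hP, -⟩ := conv_partition (φ := φ) h0 hn hx (fun i hi s hs s' hs' => by
    obtain ⟨M, hM⟩ := hc i hi
    rw [hM s hs, hM s' hs'])
  exact ⟨P, hP⟩

lemma hasStepIntegral_pInt {a b J : F} {φ : F → F} (h : HasStepIntegral a b φ J) :
    ∃ P : Finset F, Adapted a b P φ ∧ pInt b P φ = J := by
  obtain ⟨n, x, M, h0, hn, hx, hc, hJ⟩ := h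
  obtain ⟨P, hP, hval⟩ := conv_partition (φ := φ) h0 hn hx (fun i hi s hs s' hs' => by
    rw [hc i hi s hs, hc i hi s' hs'])
  refine ⟨P, hP, ?_⟩
  rw [hval, hJ]
  refine Finset.sum_congr rfl fun i hi => ?_
  rw [Finset.mem_range] at hi
  have hmid : (x i + x (i + 1)) / 2 ∈ Set.Ioo (x i) (x (i + 1)) :=
    ⟨by linarith [hx i hi], by linarith [hx i hi]⟩
  rw [hc i hi _ hmid]

lemma hasStepIntegral_self_eq_zero {a J : F} {φ : F → F} (h : HasStepIntegral a a φ J) :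
    J = 0 := by
  obtain ⟨n, x, M, h0, hn, hx, hc, hJ⟩ := h
  rcases Nat.eq_zero_or_pos n with rfl | hpos
  · simpa using hJ
  · have := xmono hx 0 n hpos (le_refl _)
    rw [h0, hn] at this
    exact absurd this (lt_irrefl a)

/-! ### Null set lemmas -/

lemma nullSet_mono {a b : F} {S T : Set F} (h : NullSet a b S) (hTS : T ⊆ S) :
    NullSet a b T := by
  intro ε hε
  obtain ⟨c, d, h1, h2, h3⟩ := h ε hε
  exact ⟨c, d, h1, hTS.trans h2, h3⟩

lemma interleave_sum (g₁ g₂ : ℕ → F) :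
    ∀ n, ∑ j ∈ Finset.range n, (fun j => if j % 2 = 0 then g₁ (j / 2) else g₂ (j / 2)) j
      = ∑ k ∈ Finset.range ((n + 1) / 2), g₁ k + ∑ k ∈ Finset.range (n / 2), g₂ k := by
  intro n
  induction n with
  | zero => simp
  | succ m ih =>
    rw [Finset.sum_range_succ, ih]
    rcases Nat.even_or_odd m with ⟨k, hk⟩ | ⟨k, hk⟩
    · subst hk
      have e1 : (k + k + 1) / 2 = k := by omega
      have e2 : (k + k) / 2 = k := by omega
      have e3 : (k + k + 1 + 1) / 2 = k + 1 := by omega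
      have e4 : (k + k) % 2 = 0 := by omega
      simp only [e1, e2, e3, if_pos e4]
      simp [Finset.sum_range_succ]
      ring
    · subst hk
      have e1 : (2 * k + 1 + 1) / 2 = k + 1 := by omega
      have e2 : (2 * k + 1) / 2 = k := by omega
      have e3 : (2 * k + 1 + 1 + 1) / 2 = k + 1 := by omega
      have e4 : ¬((2 * k + 1) % 2 = 0) := by omega
      simp only [e1, e2, e3, if_neg e4]
      simp [Finset.sum_range_succ]
      ring

lemma nullSet_union {a b : F} {S T : Set F} (hS : NullSet a b S) (hT : NullSet a b T) :
    NullSet a b (S ∪ T) := by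
  intro ε hε
  obtain ⟨c₁, d₁, h11, h12, s₁, hs₁, hconv₁⟩ := hS (ε/2) (by linarith)
  obtain ⟨c₂, d₂, h21, h22, s₂, hs₂, hconv₂⟩ := hT (ε/2) (by linarith)
  set c : ℕ → F := fun j => if j % 2 = 0 then c₁ (j / 2) else c₂ (j / 2) with hc
  set d : ℕ → F := fun j => if j % 2 = 0 then d₁ (j / 2) else d₂ (j / 2) with hd
  refine ⟨c, d, fun j => ?_, ?_, s₁ + s₂, by linarith, ?_⟩
  · rw [hc, hd]
    by_cases h : j % 2 = 0 <;> simp only [h, if_true, if_false, if_pos, if_neg, not_false_iff]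
    · exact h11 _
    · exact h21 _
  · rintro x (hx | hx)
    · obtain ⟨_, ⟨k, rfl⟩, hmem⟩ := h12 hx
      refine Set.mem_iUnion.mpr ⟨2 * k, ?_⟩
      have e1 : (2 * k) % 2 = 0 := by omega
      have e2 : (2 * k) / 2 = k := by omega
      simpa [hc, hd, e1, e2] using hmem
    · obtain ⟨_, ⟨k, rfl⟩, hmem⟩ := h22 hx
      refine Set.mem_iUnion.mpr ⟨2 * k + 1, ?_⟩
      have e1 : ¬((2 * k + 1) % 2 = 0) := by omega
      have e2 : (2 * k + 1) / 2 = k := by omega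
      simpa [hc, hd, e1, e2] using hmem
  · intro ε₂ hε₂
    obtain ⟨N₁, hN₁⟩ := hconv₁ (ε₂/2) (by linarith)
    obtain ⟨N₂, hN₂⟩ := hconv₂ (ε₂/2) (by linarith)
    refine ⟨2 * (max N₁ N₂), fun n hn => ?_⟩
    have hkey : ∑ k ∈ Finset.range n, (d k - c k)
        = ∑ k ∈ Finset.range ((n+1)/2), (d₁ k - c₁ k) + ∑ k ∈ Finset.range (n/2), (d₂ k - c₂ k) := by
      have := interleave_sum (fun k => d₁ k - c₁ k) (fun k => d₂ k - c₂ k) n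
      rw [← this]
      refine Finset.sum_congr rfl fun j _ => ?_
      rw [hc, hd]
      by_cases h : j % 2 = 0 <;> simp [h]
    have h1 := hN₁ ((n+1)/2) (by omega)
    have h2 := hN₂ (n/2) (by omega)
    simp only [Set.mem_Ioo] at h1 h2 ⊢
    rw [hkey]
    constructor <;> [linarith [h1.1, h2.1]; linarith [h1.2, h2.2]]

/-- Partial sums of a convergent series of nonnegative terms are at most the sum. -/
lemma partial_le_sum {g : ℕ → F} {s : F} (hg : ∀ k, 0 ≤ g k)
    (hconv : SeqConv (fun N => ∑ k ∈ Finset.range N, g k) s) :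
    ∀ N, ∑ k ∈ Finset.range N, g k ≤ s := by
  refine seqConv_ge_of_monotone (fun n m hnm => ?_) hconv
  exact Finset.sum_le_sum_of_subset_of_nonneg (Finset.range_subset_range.mpr hnm) fun k _ _ => hg k

lemma geom_sum_le {K : ℕ} : ∑ m ∈ Finset.range K, ((2:F)⁻¹) ^ (m + 2) ≤ 2⁻¹ := by
  have key : ∀ K : ℕ, ∑ m ∈ Finset.range K, ((2:F)⁻¹) ^ (m + 2) = 2⁻¹ - 2 * (2:F)⁻¹ ^ (K + 2) := by
    intro K
    induction K with
    | zero => norm_num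
    | succ k ih =>
      rw [Finset.sum_range_succ, ih, show k + 1 + 2 = (k + 2) + 1 from rfl, pow_succ]
      ring
  rw [key]
  have : (0:F) < (2:F)⁻¹ ^ (K + 2) := by positivity
  linarith

/-! ### The key lemma: integrals of step functions decreasing a.e. to 0 get small -/

lemma riesz_A (hCA : CutAxiom F) {a b : F} (hab : a < b) {θ : ℕ → F → F} {P : ℕ → Finset F}
    (hstep : ∀ n, Adapted a b (P n) (θ n))
    (hdec : ∀ n, ∀ x ∈ Set.Icc a b, θ (n + 1) x ≤ θ n x)
    (hae : AEOn a b (fun x => SeqConv (fun n => θ n x) 0))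
    {ε : F} (hε : 0 < ε) : ∃ N, pInt b (P N) (θ N) < ε := by
  have hchain : ∀ x ∈ Set.Icc a b, ∀ n m, n ≤ m → θ m x ≤ θ n x := by
    intro x hx
    exact chain_le (g := fun n => θ n x) (fun n => hdec n x hx)
  obtain ⟨B, hB⟩ := adapted_bound (hstep 0)
  set Bp := max B 0 with hBp
  have hBp0 : 0 ≤ Bp := le_max_right _ _
  set ε' := ε / (b - a + 2 * Bp + 1) with hε'def
  have hden : 0 < b - a + 2 * Bp + 1 := by linarith
  have hε' : 0 < ε' := div_pos hε hden
  have hε'eq : ε' * (b - a + 2 * Bp + 1) = ε := div_mul_cancel₀ _ (ne_of_gt hden)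
  obtain ⟨c₁, d₁, hcd₁, hcov₁, s, hs, hconv₁⟩ := hae ε' hε'
  have hpartial : ∀ K, ∑ k ∈ Finset.range K, (d₁ k - c₁ k) ≤ s :=
    partial_le_sum (fun k => sub_nonneg.mpr (hcd₁ k).1) hconv₁
  -- enumeration of all partition points
  set e : ℕ → F := fun m => ((P (Nat.unpair m).1).toList.getD (Nat.unpair m).2 a) with he
  have henum : ∀ n, ∀ y ∈ P n, ∃ m, e m = y := by
    intro n y hy
    have hmem : y ∈ (P n).toList := Finset.mem_toList.mpr hy
    obtain ⟨j, hj, hget⟩ := List.mem_iff_getElem.mp hmem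
    refine ⟨Nat.pair n j, ?_⟩
    rw [he]
    simp only [Nat.unpair_pair]
    rw [List.getD_eq_getElem _ _ hj]
    exact hget
  set δ : ℕ → F := fun m => ε' * (2:F)⁻¹ ^ (m + 3) with hδdef
  have hδ : ∀ m, 0 < δ m := fun m => by positivity
  -- interleaved family of small intervals
  set C : ℕ → F := fun j => if j % 2 = 0 then c₁ (j / 2) else e (j / 2) - δ (j / 2) with hC
  set D : ℕ → F := fun j => if j % 2 = 0 then d₁ (j / 2) else e (j / 2) + δ (j / 2) with hD
  have hCD : ∀ j, C j ≤ D j := by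
    intro j
    rw [hC, hD]
    by_cases h : j % 2 = 0 <;> simp only [h, if_pos, if_neg, if_true, if_false, not_false_iff]
    · exact (hcd₁ _).1
    · linarith [hδ (j / 2)]
  have hDC : ∀ K, ∑ j ∈ Finset.range K, (D j - C j) ≤ s + ε' * 2⁻¹ := by
    intro K
    have h1 : ∀ j ∈ Finset.range K, D j - C j
        = (fun j => if j % 2 = 0 then d₁ (j/2) - c₁ (j/2) else 2 * δ (j/2)) j := by
      intro j _
      rw [hC, hD]
      by_cases h : j % 2 = 0 <;> simp [h] <;> ring
    rw [Finset.sum_congr rfl h1]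
    have h2 := interleave_sum (fun k => d₁ k - c₁ k) (fun k => 2 * δ k) K
    have h2' : ∑ j ∈ Finset.range K,
        (fun j => if j % 2 = 0 then d₁ (j/2) - c₁ (j/2) else 2 * δ (j/2)) j
        = ∑ k ∈ Finset.range ((K+1)/2), (d₁ k - c₁ k) + ∑ k ∈ Finset.range (K/2), 2 * δ k := h2
    rw [h2']
    have h3 : ∑ k ∈ Finset.range (K/2), 2 * δ k ≤ ε' * 2⁻¹ := by
      have : ∀ k, 2 * δ k = ε' * (2:F)⁻¹ ^ (k + 2) := by
        intro k
        rw [hδdef]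
        simp only
        rw [show k + 3 = (k + 2) + 1 from rfl, pow_succ]
        ring
      rw [Finset.sum_congr rfl fun k _ => this k, ← Finset.mul_sum]
      exact mul_le_mul_of_nonneg_left geom_sum_le hε'.le
    linarith [hpartial ((K+1)/2)]
  -- choice of good gaps
  set G : F → Prop := fun x => ∃ p : ℕ × F, p.2 ∈ (P p.1).erase b ∧
    x ∈ Set.Ioo p.2 (nxt (P p.1) p.2) ∧ θ p.1 x < ε' with hG
  have hGdata : ∀ x, ∃ p : ℕ × F, G x → p.2 ∈ (P p.1).erase b ∧
      x ∈ Set.Ioo p.2 (nxt (P p.1) p.2) ∧ θ p.1 x < ε' := by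
    intro x
    by_cases h : G x
    · obtain ⟨p, hp⟩ := h
      exact ⟨p, fun _ => hp⟩
    · exact ⟨(0, 0), fun h' => absurd h' h⟩
  choose sel hsel using hGdata
  set u : ℕ ⊕ F → F := Sum.elim C (fun x => if G x then (sel x).2 else 0) with hu
  set v : ℕ ⊕ F → F := Sum.elim D
    (fun x => if G x then nxt (P (sel x).1) (sel x).2 else 0) with hv
  have hcover : ∀ y ∈ Set.Icc a b, ∃ i, y ∈ Set.Ioo (u i) (v i) := by
    intro y hy
    by_cases hyS : SeqConv (fun n => θ n y) 0
    · by_cases hyD : ∃ n, y ∈ P n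
      · obtain ⟨n, hyn⟩ := hyD
        obtain ⟨m, hm⟩ := henum n y hyn
        refine ⟨Sum.inl (2 * m + 1), ?_⟩
        have e1 : ¬((2 * m + 1) % 2 = 0) := by omega
        have e2 : (2 * m + 1) / 2 = m := by omega
        rw [hu, hv]
        simp only [Sum.elim_inl, hC, hD, e2, if_neg e1, hm]
        exact ⟨by linarith [hδ m], by linarith [hδ m]⟩
      · push_neg at hyD
        obtain ⟨N₀, hN₀⟩ := hyS ε' hε'
        have hθy : θ N₀ y < ε' := by
          have := (hN₀ N₀ le_rfl).2
          simpa using this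
        obtain ⟨t, ht, hgap⟩ := (hstep N₀).1.gap hy (hyD N₀)
        have hGy : G y := ⟨(N₀, t), ht, hgap, hθy⟩
        refine ⟨Sum.inr y, ?_⟩
        rw [hu, hv]
        simp only [Sum.elim_inr, if_pos hGy]
        exact (hsel y hGy).2.1
    · have hymem : y ∈ {x ∈ Set.Icc a b | ¬ SeqConv (fun n => θ n x) 0} := ⟨hy, hyS⟩
      obtain ⟨_, ⟨k, rfl⟩, hmem⟩ := hcov₁ hymem
      refine ⟨Sum.inl (2 * k), ?_⟩
      have e1 : (2 * k) % 2 = 0 := by omega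
      have e2 : (2 * k) / 2 = k := by omega
      rw [hu, hv]
      simp only [Sum.elim_inl, hC, hD, e2, if_pos e1]
      exact hmem
  obtain ⟨t₀, ht₀⟩ := heine_borel hCA hab.le u v hcover
  set N := t₀.sup (Sum.elim (fun _ => 0) (fun x => if G x then (sel x).1 else 0)) with hN
  refine ⟨N, ?_⟩
  set sfin := t₀.filter (fun i => i.isLeft) with hsfin
  have hcd' : ∀ i ∈ sfin, u i ≤ v i := by
    intro i hi
    have hleft := (Finset.mem_filter.mp hi).2
    cases i with
    | inl j => rw [hu, hv]; exact hCD j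
    | inr x => simp at hleft
  have hBbound : ∀ x ∈ Set.Ioo a b, θ N x ≤ Bp := by
    intro x hx
    have hxI : x ∈ Set.Icc a b := ⟨hx.1.le, hx.2.le⟩
    exact le_trans (hchain x hxI 0 N (Nat.zero_le _)) (le_trans (hB x hxI) (le_max_left _ _))
  have hsmall : ∀ x ∈ Set.Ioo a b, (∀ k ∈ sfin, x ∉ Set.Ioo (u k) (v k)) → θ N x ≤ ε' := by
    intro x hx hnotin
    have hxI : x ∈ Set.Icc a b := ⟨hx.1.le, hx.2.le⟩
    obtain ⟨i, hi, hxi⟩ := ht₀ x hxI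
    cases i with
    | inl j =>
      exact absurd hxi (hnotin _ (Finset.mem_filter.mpr ⟨hi, rfl⟩))
    | inr z =>
      by_cases hGz : G z
      · have hspec := hsel z hGz
        rw [hu, hv] at hxi
        simp only [Sum.elim_inr, if_pos hGz] at hxi
        have hval : θ (sel z).1 x = θ (sel z).1 z :=
          (hstep (sel z).1).2 (sel z).2 hspec.1 x hxi z hspec.2.1
        have hNz : (sel z).1 ≤ N := by
          have := Finset.le_sup (f := Sum.elim (fun _ => 0) (fun x => if G x then (sel x).1 else 0)) hi
          simpa [if_pos hGz] using this
        calc θ N x ≤ θ (sel z).1 x := hchain x hxI _ N hNz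
          _ = θ (sel z).1 z := hval
          _ ≤ ε' := (hspec.2.2).le
      · rw [hu, hv] at hxi
        simp only [Sum.elim_inr, if_neg hGz] at hxi
        exact absurd (lt_trans hxi.1 hxi.2) (lt_irrefl _)
  have hmain := pInt_le_cover (hstep N) sfin u v hcd' hBp0 hε'.le hBbound hsmall
  -- bound the total length of the chosen intervals
  have hsumbound : ∑ k ∈ sfin, (v k - u k) ≤ s + ε' * 2⁻¹ := by
    set getIdx : ℕ ⊕ F → ℕ := Sum.elim id (fun _ => 0) with hgetIdx
    have hinj : ∀ i ∈ sfin, ∀ i' ∈ sfin, getIdx i = getIdx i' → i = i' := by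
      intro i hi i' hi' hii'
      have h1 := (Finset.mem_filter.mp hi).2
      have h2 := (Finset.mem_filter.mp hi').2
      cases i with
      | inl j => cases i' with
        | inl j' => simpa [hgetIdx] using hii'
        | inr x => simp at h2
      | inr x => simp at h1
    have himg : ∑ i ∈ sfin, (v i - u i) = ∑ j ∈ sfin.image getIdx, (D j - C j) := by
      rw [Finset.sum_image hinj]
      refine Finset.sum_congr rfl fun i hi => ?_
      have h1 := (Finset.mem_filter.mp hi).2
      cases i with
      | inl j => rw [hu, hv]; simp [hgetIdx]
      | inr x => simp at h1
    rw [himg]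
    set K := (sfin.image getIdx).sup id + 1 with hK
    have hsubset : sfin.image getIdx ⊆ Finset.range K := by
      intro j hj
      rw [Finset.mem_range, hK]
      exact Nat.lt_succ_of_le (Finset.le_sup (f := id) hj)
    calc ∑ j ∈ sfin.image getIdx, (D j - C j)
        ≤ ∑ j ∈ Finset.range K, (D j - C j) :=
          Finset.sum_le_sum_of_subset_of_nonneg hsubset fun j _ _ => by linarith [hCD j]
      _ ≤ s + ε' * 2⁻¹ := hDC K
  -- final arithmetic
  have hfin : Bp * ∑ k ∈ sfin, (v k - u k) ≤ Bp * (s + ε' * 2⁻¹) :=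
    mul_le_mul_of_nonneg_left hsumbound hBp0
  have hfin2 : Bp * (s + ε' * 2⁻¹) ≤ Bp * (2 * ε') := by
    refine mul_le_mul_of_nonneg_left ?_ hBp0
    linarith
  have hfin3 : ε' * (b - a) + Bp * (2 * ε') = ε - ε' := by linear_combination hε'eq
  linarith [hmain, hfin, hfin2]

/-! ### Comparing two approximating sequences -/

def GoodSeq (a b : F) (f : F → F) (φ : ℕ → F → F) (P : ℕ → Finset F) : Prop :=
  (∀ n, Adapted a b (P n) (φ n)) ∧
  (∀ n, ∀ x ∈ Set.Icc a b, 0 ≤ φ n x) ∧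
  (∀ n, ∀ x ∈ Set.Icc a b, φ (n + 1) x ≤ φ n x) ∧
  AEOn a b fun x => SeqConv (fun n => φ n x) (f x)

lemma approx_good {a b : F} {f : F → F} {φ : ℕ → F → F} (h : ApproxSeq a b φ f) :
    ∃ P : ℕ → Finset F, GoodSeq a b f φ P := by
  choose P hP using fun n => isStepOn_adapted (h.1 n)
  exact ⟨P, hP, h.2.1, h.2.2.1, h.2.2.2⟩

lemma pInt_zero (b : F) (P : Finset F) : pInt b P (fun _ => (0:F)) = 0 := by
  rw [pInt]
  exact Finset.sum_eq_zero fun t _ => zero_mul _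

lemma goodSeq_antitone {a b : F} {f : F → F} {φ : ℕ → F → F} {P : ℕ → Finset F}
    (h : GoodSeq a b f φ P) : ∀ n m, n ≤ m → pInt b (P m) (φ m) ≤ pInt b (P n) (φ n) := by
  refine chain_le (g := fun n => pInt b (P n) (φ n)) fun n => ?_
  exact pInt_mono (h.1 (n+1)) (h.1 n) ∅ fun x hx _ => h.2.2.1 n x ⟨hx.1.le, hx.2.le⟩

lemma goodSeq_nonneg {a b : F} {f : F → F} {φ : ℕ → F → F} {P : ℕ → Finset F}
    (h : GoodSeq a b f φ P) (hab : a ≤ b) : ∀ n, 0 ≤ pInt b (P n) (φ n) := by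
  intro n
  have h0 : pInt b ({a, b} : Finset F) (fun _ => (0:F)) = 0 := pInt_zero _ _
  rw [← h0]
  exact pInt_mono (adapted_zero hab) (h.1 n) ∅ fun x hx _ => h.2.1 n x ⟨hx.1.le, hx.2.le⟩

lemma riesz_B (hCA : CutAxiom F) {a b : F} (hab : a < b) {f : F → F}
    {φ ψ : ℕ → F → F} {Pφ Qψ : ℕ → Finset F}
    (hφ : GoodSeq a b f φ Pφ) (hψ : GoodSeq a b f ψ Qψ) (m : ℕ) {ε : F} (hε : 0 < ε) :
    ∃ N, ∀ n, N ≤ n → pInt b (Pφ n) (φ n) ≤ pInt b (Qψ m) (ψ m) + ε := by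
  set σ : ℕ → F → F := fun n x => max (φ n x - ψ m x) 0 with hσ
  set Q : ℕ → Finset F := fun n => Pφ n ∪ Qψ m with hQdef
  have hQpart : ∀ n, Part a b (Q n) := by
    intro n
    refine ⟨Finset.mem_union_left _ (hφ.1 n).1.1, Finset.mem_union_left _ (hφ.1 n).1.2.1, ?_⟩
    intro x hx
    rcases Finset.mem_union.mp (Finset.mem_coe.mp hx) with h | h
    · exact (hφ.1 n).1.2.2 h
    · exact (hψ.1 m).1.2.2 h
  have hadφ : ∀ n, Adapted a b (Q n) (φ n) ∧ pInt b (Q n) (φ n) = pInt b (Pφ n) (φ n) :=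
    fun n => refine_step (hφ.1 n) Finset.subset_union_left (hQpart n)
  have hadψ : ∀ n, Adapted a b (Q n) (ψ m) ∧ pInt b (Q n) (ψ m) = pInt b (Qψ m) (ψ m) :=
    fun n => refine_step (hψ.1 m) Finset.subset_union_right (hQpart n)
  have hadσ : ∀ n, Adapted a b (Q n) (σ n) := by
    intro n
    refine ⟨hQpart n, fun t ht x hx y hy => ?_⟩
    rw [hσ]
    simp only
    rw [(hadφ n).1.2 t ht x hx y hy, (hadψ n).1.2 t ht x hx y hy]
  have hdecσ : ∀ n, ∀ x ∈ Set.Icc a b, σ (n + 1) x ≤ σ n x := by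
    intro n x hx
    exact max_le_max (sub_le_sub_right (hφ.2.2.1 n x hx) _) le_rfl
  have haeσ : AEOn a b fun x => SeqConv (fun n => σ n x) 0 := by
    refine nullSet_mono (nullSet_union hφ.2.2.2 hψ.2.2.2) ?_
    rintro x ⟨hxI, hxn⟩
    by_cases h1 : SeqConv (fun n => φ n x) (f x)
    · by_cases h2 : SeqConv (fun n => ψ n x) (f x)
      · exfalso
        apply hxn
        have hfψ : f x ≤ ψ m x :=
          seqConv_le_of_antitone (chain_le fun k => hψ.2.2.1 k x hxI) h2 m
        intro ε₂ hε₂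
        obtain ⟨N, hN⟩ := h1 ε₂ hε₂
        refine ⟨N, fun n hn => ?_⟩
        have h3 := hN n hn
        simp only [Set.mem_Ioo] at h3 ⊢
        constructor
        · have : (0:F) ≤ σ n x := le_max_right _ _
          linarith
        · rw [hσ]
          simp only [sub_zero]
          refine max_lt ?_ hε₂
          linarith [h3.2]
      · exact Or.inr ⟨hxI, h2⟩
    · exact Or.inl ⟨hxI, h1⟩
  obtain ⟨N, hN⟩ := riesz_A hCA hab hadσ hdecσ haeσ hε
  refine ⟨N, fun n hn => ?_⟩
  have h1 : pInt b (Q n) (σ n) ≤ pInt b (Q N) (σ N) := by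
    refine pInt_mono (hadσ n) (hadσ N) ∅ fun x hx _ => ?_
    exact chain_le (g := fun k => σ k x) (fun k => hdecσ k x ⟨hx.1.le, hx.2.le⟩) N n hn
  have hadd : Adapted a b (Q n) (fun x => σ n x + ψ m x) := by
    refine ⟨hQpart n, fun t ht x hx y hy => ?_⟩
    simp only
    rw [(hadσ n).2 t ht x hx y hy, (hadψ n).1.2 t ht x hx y hy]
  have h2 : pInt b (Q n) (φ n) ≤ pInt b (Q n) (fun x => σ n x + ψ m x) := by
    refine pInt_mono (hadφ n).1 hadd ∅ fun x hx _ => ?_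
    have : φ n x - ψ m x ≤ σ n x := le_max_left _ _
    linarith
  have h3 : pInt b (Q n) (fun x => σ n x + ψ m x)
      = pInt b (Q n) (σ n) + pInt b (Q n) (ψ m) := pInt_add _ _
  have h4 := (hadφ n).2
  have h5 := (hadψ n).2
  linarith [hN]

/-! ### Existence of the Lebesgue integral -/

lemma main_NN (hCA : CutAxiom F) {a b : F} (hab : a < b) {f : F → F}
    (hmeas : LebMeasurableNN a b f) : ∃ I : F, HasLebIntegralNN a b f I := by
  obtain ⟨ψ, hψ⟩ := hmeas
  obtain ⟨Q, hQgood⟩ := approx_good hψ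
  set K : ℕ → F := fun m => pInt b (Q m) (ψ m) with hK
  obtain ⟨L, hLconv, hLle⟩ := exists_lim_of_antitone hCA (goodSeq_antitone hQgood)
    (goodSeq_nonneg hQgood hab.le)
  refine ⟨L, ⟨ψ, hψ⟩, ?_⟩
  intro φseq hφseq J hJ
  choose Pn hPn using fun n => hasStepIntegral_pInt (hJ n)
  have hPgood : GoodSeq a b f φseq Pn := ⟨fun n => (hPn n).1, hφseq.2.1, hφseq.2.2.1, hφseq.2.2.2⟩
  have hJeq : ∀ n, J n = pInt b (Pn n) (φseq n) := fun n => ((hPn n).2).symm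
  have hJanti : ∀ n m', n ≤ m' → J m' ≤ J n := by
    intro n m' h
    rw [hJeq n, hJeq m']
    exact goodSeq_antitone hPgood n m' h
  have hJ0 : ∀ n, (0:F) ≤ J n := fun n => (hJeq n) ▸ goodSeq_nonneg hPgood hab.le n
  obtain ⟨L', hL'conv, hL'le⟩ := exists_lim_of_antitone hCA hJanti hJ0
  have hL'K : ∀ m', L' ≤ pInt b (Q m') (ψ m') := by
    intro m'
    refine le_of_forall_pos_le_add fun ε hε => ?_
    obtain ⟨N, hN⟩ := riesz_B hCA hab hPgood hQgood m' hε
    calc L' ≤ J N := hL'le N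
      _ = pInt b (Pn N) (φseq N) := hJeq N
      _ ≤ pInt b (Q m') (ψ m') + ε := hN N le_rfl
  have hLJ : ∀ n, L ≤ J n := by
    intro n
    refine le_of_forall_pos_le_add fun ε hε => ?_
    obtain ⟨N, hN⟩ := riesz_B hCA hab hQgood hPgood n hε
    calc L ≤ pInt b (Q N) (ψ N) := hLle N
      _ ≤ pInt b (Pn n) (φseq n) + ε := hN N le_rfl
      _ = J n + ε := by rw [← hJeq n]
  have hL'L : L' ≤ L := by
    refine le_of_forall_pos_le_add fun ε hε => ?_
    obtain ⟨M, hM⟩ := hLconv ε hε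
    have h1 := (hM M le_rfl).2
    have h2 := hL'K M
    simp only at h1 h2
    linarith
  have hLL' : L ≤ L' := by
    refine le_of_forall_pos_le_add fun ε hε => ?_
    obtain ⟨M, hM⟩ := hL'conv ε hε
    have h1 := (hM M le_rfl).2
    have h2 := hLJ M
    linarith
  have : L = L' := le_antisymm hLL' hL'L
  rw [this]
  exact hL'conv

theorem cutAxiom_implies_lebesgueIntegralProperty (F : Type*) [Field F] [LinearOrder F] [IsStrictOrderedRing F]
    (hCA : CutAxiom F) :
    ∀ a b : F, a ≤ b → ∀ f : F → F, LebMeasurable a b f → HasLebIntegral a b f := by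
  intro a b hab f hf
  rcases eq_or_lt_of_le hab with rfl | hlt
  · have deg : ∀ g : F → F, LebMeasurableNN a a g → ∃ I : F, HasLebIntegralNN a a g I := by
      intro g hg
      refine ⟨0, hg, fun φ hφ J hJ ε hε => ⟨0, fun n _ => ?_⟩⟩
      rw [hasStepIntegral_self_eq_zero (hJ n)]
      simp only [Set.mem_Ioo, sub_zero]
      constructor <;> linarith
    exact ⟨deg _ hf.1, deg _ hf.2⟩
  · exact ⟨main_NN hCA hlt hf.1, main_NN hCA hlt hf.2⟩

end Littlewood
end
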